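/- arXiv:2107.02748 — 10 statements merged into one kernel-verified Lean document; each statement's English description precedes it below -/
import Mathlib

section
/- Let ℓ be a literal of a variable x, let t ≥ 8, and let S be the CNF formula consisting of the clauses (ℓ ∨ a_1 ∨ b_1), …, (ℓ ∨ a_t ∨ b_t), (u ∨ v ∨ w), where a_1, b_1, …, a_t, b_t are literals of 2t pairwise distinct variables all different from x, u, v, w are literals of three distinct variables, and the literal ℓ does not occur in the clause (u ∨ v ∨ w) (though ¬ℓ may occur in it). Then #SAT(S) < 2^{r−1}, where r is the total number of distinct variables occurring in S. -/
/-- A literal over `n` Boolean variables: a variable together with a polarity. -/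
abbrev Lit (n : ℕ) := Fin n × Bool

/-- A clause: a finite set of literals (interpreted as their disjunction). -/
abbrev Clause (n : ℕ) := Finset (Lit n)

/-- A CNF formula: a finite set of clauses (interpreted as their conjunction). -/
abbrev Cnf (n : ℕ) := Finset (Clause n)

/-- An assignment satisfies a clause if some literal of the clause is true. -/
def clauseSat {n : ℕ} (A : Fin n → Bool) (C : Clause n) : Prop :=
  ∃ l ∈ C, A l.1 = l.2

/-- An assignment satisfies a CNF if it satisfies every clause. -/
def cnfSat {n : ℕ} (A : Fin n → Bool) (F : Cnf n) : Prop :=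
  ∀ C ∈ F, clauseSat A C

/-- `numSat F` is the number of satisfying assignments of `F` (out of `2^n`). -/
noncomputable def numSat {n : ℕ} (F : Cnf n) : ℕ :=
  Nat.card {A : Fin n → Bool // cnfSat A F}

/-- The set of variables occurring in a clause. -/
def clVars {n : ℕ} (C : Clause n) : Finset (Fin n) := C.image Prod.fst

/-- A finite set of literals has pairwise distinct variables. -/
def distinctVars {n : ℕ} (C : Clause n) : Prop :=
  ∀ l ∈ C, ∀ l' ∈ C, l.1 = l'.1 → l = l'

/-- A set of clauses is variable-disjoint if no two distinct clauses share a variable. -/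
def varDisjoint {n : ℕ} (S : Finset (Clause n)) : Prop :=
  ∀ C ∈ S, ∀ C' ∈ S, C ≠ C' → Disjoint (clVars C) (clVars C')

/-- `S` is a `w`-sunflower: there is a core `L` of `w` distinct literals contained in every
clause, and removing the core from each clause yields a variable-disjoint set. -/
def isSunflower {n : ℕ} (S : Finset (Clause n)) (w : ℕ) : Prop :=
  ∃ L : Finset (Lit n), L.card = w ∧ (∀ C ∈ S, L ⊆ C) ∧
    ∀ C ∈ S, ∀ C' ∈ S, C ≠ C' → Disjoint (clVars (C \ L)) (clVars (C' \ L))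

/-- A set of literals is consistent if it never contains both a variable and its negation. -/
def consistentLits {n : ℕ} (L : Finset (Lit n)) : Prop :=
  ∀ x : Fin n, ¬((x, true) ∈ L ∧ (x, false) ∈ L)

lemma cardBool2 : ∀ a b : Bool, Fintype.card {f : Bool → Bool // f true = a ∨ f false = b} = 3 := by decide

lemma cardOpt3 : ∀ a b c : Bool, Fintype.card {f : Option Bool → Bool // f none = a ∨ f (some true) = b ∨ f (some false) = c} = 7 := by decide

lemma card3 : ∀ a b : Bool, Fintype.card {p : Bool × Bool // p.1 = a ∨ p.2 = b} = 3 := by decide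

lemma powLemma : ∀ t, 8 ≤ t → 8 * 3^t < 4^t := by
  intro t ht
  induction t with
  | zero => omega
  | succ k ih =>
    rcases Nat.lt_or_ge k 8 with h|h
    · have : k = 7 := by omega
      subst this; norm_num
    · have ihk := ih h
      calc 8 * 3^(k+1) = 3 * (8 * 3^k) := by ring
        _ < 3 * 4^k := by nlinarith
        _ ≤ 4^(k+1) := by
            rw [pow_succ]; nlinarith [pow_pos (show (0:ℕ) < 4 by norm_num) k]

lemma gen_bound {n : ℕ} (x : Fin n) (c : Bool) {α : Type} [Fintype α] [DecidableEq α]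
    (g : α → Fin n) (hg : Function.Injective g) (hgx : ∀ a, g a ≠ x)
    (Q : (α → Bool) → Prop) [DecidablePred Q] :
    (Finset.univ.filter fun A : Fin n → Bool => A x = c ∧ Q (fun a => A (g a))).card
      ≤ Fintype.card {f : α → Bool // Q f} * 2 ^ (n - (Fintype.card α + 1)) := by
  classical
  set V : Finset (Fin n) := insert x (Finset.univ.image g) with hV
  have hxg : x ∉ Finset.univ.image g := by
    simp only [Finset.mem_image, Finset.mem_univ, true_and, not_exists]
    exact fun a h => hgx a h
  have hVcard : V.card = Fintype.card α + 1 := by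
    rw [hV, Finset.card_insert_of_notMem hxg,
      Finset.card_image_of_injective _ hg, Finset.card_univ]
  have hcompl : Fintype.card {y : Fin n // y ∉ V} = n - (Fintype.card α + 1) := by
    rw [Fintype.card_subtype_compl, Fintype.card_fin]
    congr 1
    rw [Fintype.card_coe, hVcard]
  have key := Finset.card_le_card_of_injOn
    (f := fun A : Fin n → Bool =>
      ((fun a => A (g a), fun y : {y : Fin n // y ∉ V} => A y.1)
        : (α → Bool) × ({y : Fin n // y ∉ V} → Bool)))
    (s := Finset.univ.filter fun A : Fin n → Bool => A x = c ∧ Q (fun a => A (g a)))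
    (t := (Finset.univ.filter Q) ×ˢ Finset.univ)
    (by
      intro A hA
      rw [Finset.mem_coe, Finset.mem_filter] at hA
      rw [Finset.mem_coe, Finset.mem_product, Finset.mem_filter]
      exact ⟨⟨Finset.mem_univ _, hA.2.2⟩, Finset.mem_univ _⟩)
    (by
      intro A hA A' hA' hEq
      simp only [Finset.coe_filter, Set.mem_setOf_eq, Finset.mem_univ, true_and] at hA hA'
      have h1 := congrArg Prod.fst hEq
      have h2 := congrArg Prod.snd hEq
      simp only at h1 h2
      funext y
      by_cases hy : y ∈ V
      · rw [hV, Finset.mem_insert] at hy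
        rcases hy with rfl | hy
        · rw [hA.1, hA'.1]
        · rw [Finset.mem_image] at hy
          obtain ⟨a, -, rfl⟩ := hy
          exact congrFun h1 a
      · exact congrFun h2 ⟨y, hy⟩)
  refine key.trans (le_of_eq ?_)
  rw [Finset.card_product, Finset.card_univ, Fintype.card_fun, Fintype.card_bool, hcompl,
    Fintype.card_subtype]

open Classical in
lemma bound2 {n : ℕ} (x p q : Fin n) (bx sp sq : Bool)
    (hp : p ≠ x) (hq : q ≠ x) (hpq : p ≠ q) :
    (Finset.univ.filter fun A : Fin n → Bool => A x = bx ∧ (A p = sp ∨ A q = sq)).card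
      ≤ 3 * 2 ^ (n - 3) := by
  classical
  have key := gen_bound x bx (fun b : Bool => if b then p else q)
    (by intro a b h; cases a <;> cases b <;> simp_all)
    (by intro b; cases b <;> simp_all)
    (fun f => f true = sp ∨ f false = sq)
  rw [cardBool2, Fintype.card_bool] at key
  refine le_trans (le_of_eq (congrArg Finset.card (Finset.filter_congr ?_))) key
  intro A _
  simp

open Classical in
lemma bound3 {n : ℕ} (x p q r : Fin n) (bx sp sq sr : Bool)
    (hp : p ≠ x) (hq : q ≠ x) (hr : r ≠ x)
    (hpq : p ≠ q) (hpr : p ≠ r) (hqr : q ≠ r) :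
    (Finset.univ.filter fun A : Fin n → Bool =>
        A x = bx ∧ (A p = sp ∨ A q = sq ∨ A r = sr)).card
      ≤ 7 * 2 ^ (n - 4) := by
  classical
  have key := gen_bound x bx (fun o : Option Bool => o.elim p (fun b => if b then q else r))
    (by rintro (_|(_|_)) (_|(_|_)) h <;> simp_all)
    (by rintro (_|(_|_)) <;> simp_all)
    (fun f => f none = sp ∨ f (some true) = sq ∨ f (some false) = sr)
  rw [cardOpt3] at key
  have hcard : Fintype.card (Option Bool) = 3 := by simp
  rw [hcard] at key
  refine le_trans (le_of_eq (congrArg Finset.card (Finset.filter_congr ?_))) key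
  intro A _
  simp

open Classical in
lemma cardPairs (t : ℕ) (sa sb : Fin t → Bool) :
    Fintype.card {f : Fin t × Bool → Bool // ∀ i, f (i, true) = sa i ∨ f (i, false) = sb i}
      = 3 ^ t := by
  classical
  have e : {f : Fin t × Bool → Bool // ∀ i, f (i, true) = sa i ∨ f (i, false) = sb i}
      ≃ (∀ i : Fin t, {p : Bool × Bool // p.1 = sa i ∨ p.2 = sb i}) :=
  { toFun := fun f i => ⟨(f.1 (i, true), f.1 (i, false)), f.2 i⟩
    invFun := fun h => ⟨fun p => if p.2 then (h p.1).1.1 else (h p.1).1.2, fun i => by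
      simpa using (h i).2⟩
    left_inv := fun f => Subtype.ext (funext fun p => by
      rcases p with ⟨i, b⟩; cases b <;> simp)
    right_inv := fun h => funext fun i => Subtype.ext (by simp) }
  rw [Fintype.card_congr e, Fintype.card_pi]
  simp [card3]

lemma arith34 (n : ℕ) : (3:ℕ) * 2 ^ (n - 3) ≤ 7 * 2 ^ (n - 4) := by
  have h : (2:ℕ) ^ (n - 3) ≤ 2 * 2 ^ (n - 4) := by
    rw [← pow_succ']
    exact Nat.pow_le_pow_right (by norm_num) (by omega)
  calc (3:ℕ) * 2 ^ (n - 3) ≤ 3 * (2 * 2 ^ (n - 4)) := Nat.mul_le_mul (le_refl 3) h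
    _ = 6 * 2 ^ (n - 4) := by ring
    _ ≤ 7 * 2 ^ (n - 4) := Nat.mul_le_mul_right _ (by norm_num)

lemma arithFinal (n t : ℕ) (ht : 8 ≤ t) (hn : 2 * t + 1 ≤ n) :
    7 * 2 ^ (n - 4) + 3 ^ t * 2 ^ (n - (2 * t + 1)) < 2 ^ (n - 1) := by
  have h8 := powLemma t ht
  have e1 : n - 4 = (n - (2 * t + 1)) + (2 * t - 3) := by omega
  have e2 : n - 1 = (n - (2 * t + 1)) + 2 * t := by omega
  rw [e1, e2, pow_add, pow_add]
  have h3t : 3 ^ t < 2 ^ (2 * t - 3) := by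
    have h2 : (2:ℕ) ^ 3 * 3 ^ t < 2 ^ 3 * 2 ^ (2 * t - 3) := by
      calc (2:ℕ) ^ 3 * 3 ^ t = 8 * 3 ^ t := by norm_num
        _ < 4 ^ t := h8
        _ = 2 ^ (2 * t) := by rw [show (4:ℕ) = 2 ^ 2 by norm_num, ← pow_mul]
        _ = 2 ^ 3 * 2 ^ (2 * t - 3) := by rw [← pow_add]; congr 1; omega
    exact Nat.lt_of_mul_lt_mul_left h2
  have h4 : (2:ℕ) ^ (2 * t) = 8 * 2 ^ (2 * t - 3) := by
    rw [show (8:ℕ) = 2 ^ 3 by norm_num, ← pow_add]; congr 1; omega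
  rw [h4]
  nlinarith [h3t, pow_pos (show (0:ℕ) < 2 by norm_num) (n - (2 * t + 1)),
    Nat.mul_lt_mul_of_lt_of_le h3t (le_refl ((2:ℕ) ^ (n - (2 * t + 1)))) (by positivity)]

/-- For `t ≥ 8`, the CNF `S` with clauses `(ℓ ∨ a_i ∨ b_i)` for `1 ≤ i ≤ t` (the `a_i, b_i`
on `2t` pairwise distinct variables different from the variable of `ℓ`) together with one
clause `(u ∨ v ∨ w)` on three distinct variables not containing the literal `ℓ`, has fewer
than `2^{r-1}` satisfying assignments, where `r` is its total number of variables (here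
every variable occurs in `S`, so `r = n`). -/
theorem stmt5 (n t : ℕ) (ht : 8 ≤ t)
    (x : Fin n) (bx : Bool)
    (av bv : Fin t → Fin n) (sa sb : Fin t → Bool)
    (u v w : Lit n)
    (hinj : Function.Injective (fun p : Fin t × Bool => if p.2 then av p.1 else bv p.1))
    (hax : ∀ i, av i ≠ x) (hbx : ∀ i, bv i ≠ x)
    (huv : u.1 ≠ v.1) (huw : u.1 ≠ w.1) (hvw : v.1 ≠ w.1)
    (hlu : (x, bx) ≠ u) (hlv : (x, bx) ≠ v) (hlw : (x, bx) ≠ w)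
    (S : Cnf n)
    (hS : S = insert ({u, v, w} : Clause n)
        (Finset.image (fun i : Fin t =>
          ({(x, bx), (av i, sa i), (bv i, sb i)} : Clause n)) Finset.univ))
    (hall : ∀ y : Fin n, ∃ C ∈ S, y ∈ clVars C) :
    numSat S < 2^(n - 1) := by
  classical
  have hnum : numSat S = (Finset.univ.filter fun A : Fin n → Bool => cnfSat A S).card := by
    rw [numSat, Nat.card_eq_fintype_card, Fintype.card_subtype]
  have hgx : ∀ p : Fin t × Bool, (fun p : Fin t × Bool => if p.2 then av p.1 else bv p.1) p ≠ x := by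
    rintro ⟨i, (_|_)⟩ <;> simp [hax i, hbx i]
  have hn : 2 * t + 1 ≤ n := by
    have h1 := Finset.card_le_univ
      (insert x (Finset.univ.image (fun p : Fin t × Bool => if p.2 then av p.1 else bv p.1)))
    rw [Finset.card_insert_of_notMem (by
        simp only [Finset.mem_image, Finset.mem_univ, true_and, not_exists]
        exact fun a h => hgx a h),
      Finset.card_image_of_injective _ hinj] at h1
    simp only [Finset.card_univ, Fintype.card_fin, Fintype.card_prod, Fintype.card_bool] at h1
    omega
  have hsub : (Finset.univ.filter fun A : Fin n → Bool => cnfSat A S)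
      ⊆ (Finset.univ.filter fun A : Fin n → Bool =>
            A x = bx ∧ (A u.1 = u.2 ∨ A v.1 = v.2 ∨ A w.1 = w.2))
        ∪ (Finset.univ.filter fun A : Fin n → Bool =>
            A x = !bx ∧ ∀ i, A (av i) = sa i ∨ A (bv i) = sb i) := by
    intro A hA
    rw [Finset.mem_filter] at hA
    have hP := hA.2
    have h3 : clauseSat A {u, v, w} := hP _ (by rw [hS]; exact Finset.mem_insert_self _ _)
    rw [Finset.mem_union, Finset.mem_filter, Finset.mem_filter]
    by_cases hx : A x = bx
    · left
      refine ⟨Finset.mem_univ _, hx, ?_⟩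
      obtain ⟨l, hl, hAl⟩ := h3
      simp only [Finset.mem_insert, Finset.mem_singleton] at hl
      rcases hl with rfl | rfl | rfl
      · exact Or.inl hAl
      · exact Or.inr (Or.inl hAl)
      · exact Or.inr (Or.inr hAl)
    · right
      refine ⟨Finset.mem_univ _, by revert hx; cases A x <;> cases bx <;> simp, ?_⟩
      intro i
      have hc : clauseSat A {(x, bx), (av i, sa i), (bv i, sb i)} :=
        hP _ (by
          rw [hS]
          exact Finset.mem_insert_of_mem
            (Finset.mem_image_of_mem _ (Finset.mem_univ i)))
      obtain ⟨l, hl, hAl⟩ := hc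
      simp only [Finset.mem_insert, Finset.mem_singleton] at hl
      rcases hl with rfl | rfl | rfl
      · exact absurd hAl hx
      · exact Or.inl hAl
      · exact Or.inr hAl
  have hb1 : (Finset.univ.filter fun A : Fin n → Bool =>
      A x = !bx ∧ ∀ i, A (av i) = sa i ∨ A (bv i) = sb i).card
      ≤ 3 ^ t * 2 ^ (n - (2 * t + 1)) := by
    have key := gen_bound x (!bx) (fun p : Fin t × Bool => if p.2 then av p.1 else bv p.1)
      hinj hgx (fun f => ∀ i, f (i, true) = sa i ∨ f (i, false) = sb i)
    rw [cardPairs] at key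
    have hcard : Fintype.card (Fin t × Bool) = 2 * t := by simp [mul_comm]
    rw [hcard] at key
    refine le_trans (le_of_eq (congrArg Finset.card (Finset.filter_congr ?_))) key
    intro A _
    simp
  have h34 : (3:ℕ) * 2 ^ (n - 3) ≤ 7 * 2 ^ (n - 4) := arith34 n
  have hb0 : (Finset.univ.filter fun A : Fin n → Bool =>
      A x = bx ∧ (A u.1 = u.2 ∨ A v.1 = v.2 ∨ A w.1 = w.2)).card
      ≤ 7 * 2 ^ (n - 4) := by
    by_cases hux : u.1 = x
    · have hu2 : u.2 = !bx := by
        refine Bool.eq_not_iff.2 fun h => hlu (Prod.ext hux.symm h.symm)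
      have hsubu : (Finset.univ.filter fun A : Fin n → Bool =>
          A x = bx ∧ (A u.1 = u.2 ∨ A v.1 = v.2 ∨ A w.1 = w.2))
          ⊆ (Finset.univ.filter fun A : Fin n → Bool =>
              A x = bx ∧ (A v.1 = v.2 ∨ A w.1 = w.2)) := by
        intro A hA
        rw [Finset.mem_filter] at hA ⊢
        obtain ⟨hAu, hxA, hd⟩ := hA
        refine ⟨hAu, hxA, ?_⟩
        rcases hd with h | h | h
        · rw [hux, hxA, hu2] at h
          exact absurd h (by simp)
        · exact Or.inl h
        · exact Or.inr h
      refine le_trans (Finset.card_le_card hsubu) (le_trans (bound2 x v.1 w.1 bx v.2 w.2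
        (by rw [← hux]; exact huv.symm) (by rw [← hux]; exact huw.symm) hvw) h34)
    · by_cases hvx : v.1 = x
      · have hv2 : v.2 = !bx := by
          refine Bool.eq_not_iff.2 fun h => hlv (Prod.ext hvx.symm h.symm)
        have hsubv : (Finset.univ.filter fun A : Fin n → Bool =>
            A x = bx ∧ (A u.1 = u.2 ∨ A v.1 = v.2 ∨ A w.1 = w.2))
            ⊆ (Finset.univ.filter fun A : Fin n → Bool =>
                A x = bx ∧ (A u.1 = u.2 ∨ A w.1 = w.2)) := by
          intro A hA
          rw [Finset.mem_filter] at hA ⊢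
          obtain ⟨hAu, hxA, hd⟩ := hA
          refine ⟨hAu, hxA, ?_⟩
          rcases hd with h | h | h
          · exact Or.inl h
          · rw [hvx, hxA, hv2] at h
            exact absurd h (by simp)
          · exact Or.inr h
        refine le_trans (Finset.card_le_card hsubv) (le_trans (bound2 x u.1 w.1 bx u.2 w.2
          (by rw [← hvx]; exact huv) (by rw [← hvx]; exact hvw.symm) huw) h34)
      · by_cases hwx : w.1 = x
        · have hw2 : w.2 = !bx :=
            Bool.eq_not_iff.2 fun h => hlw (Prod.ext hwx.symm h.symm)
          have hsubw : (Finset.univ.filter fun A : Fin n → Bool =>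
              A x = bx ∧ (A u.1 = u.2 ∨ A v.1 = v.2 ∨ A w.1 = w.2))
              ⊆ (Finset.univ.filter fun A : Fin n → Bool =>
                  A x = bx ∧ (A u.1 = u.2 ∨ A v.1 = v.2)) := by
            intro A hA
            rw [Finset.mem_filter] at hA ⊢
            obtain ⟨hAu, hxA, hd⟩ := hA
            refine ⟨hAu, hxA, ?_⟩
            rcases hd with h | h | h
            · exact Or.inl h
            · exact Or.inr h
            · rw [hwx, hxA, hw2] at h
              exact absurd h (by simp)
          refine le_trans (Finset.card_le_card hsubw) (le_trans (bound2 x u.1 v.1 bx u.2 v.2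
            (by rw [← hwx]; exact huw) (by rw [← hwx]; exact hvw) huv) h34)
        · exact bound3 x u.1 v.1 w.1 bx u.2 v.2 w.2 hux hvx hwx huv huw hvw
  rw [hnum]
  calc (Finset.univ.filter fun A : Fin n → Bool => cnfSat A S).card
      ≤ ((Finset.univ.filter fun A : Fin n → Bool =>
            A x = bx ∧ (A u.1 = u.2 ∨ A v.1 = v.2 ∨ A w.1 = w.2))
        ∪ (Finset.univ.filter fun A : Fin n → Bool =>
            A x = !bx ∧ ∀ i, A (av i) = sa i ∨ A (bv i) = sb i)).card :=
        Finset.card_le_card hsub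
    _ ≤ (Finset.univ.filter fun A : Fin n → Bool =>
            A x = bx ∧ (A u.1 = u.2 ∨ A v.1 = v.2 ∨ A w.1 = w.2)).card
        + (Finset.univ.filter fun A : Fin n → Bool =>
            A x = !bx ∧ ∀ i, A (av i) = sa i ∨ A (bv i) = sb i).card :=
        Finset.card_union_le _ _
    _ ≤ 7 * 2 ^ (n - 4) + 3 ^ t * 2 ^ (n - (2 * t + 1)) := Nat.add_le_add hb0 hb1
    _ < 2 ^ (n - 1) := arithFinal n t ht hn
end

section
/- Let ρ ∈ (0,1) be a rational number and let m be a positive integer. Then there exists a real number η > 0, depending only on ρ and m, such that for every positive integer n and every integer N that is a sum of at most m powers of two: if N < ρ·2^n, then N ≤ (ρ − η)·2^n. -/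
/-- `N` is a sum of at most `m` powers of two (repetitions allowed). -/
def IsSumOfPowsTwo (m : ℕ) (N : ℤ) : Prop :=
  ∃ l : Multiset ℕ, l.card ≤ m ∧ N = (l.map (fun j => (2 : ℤ)^j)).sum

private lemma term_eq (k K : ℕ) (h : k ≤ K) : ((1:ℚ)/2)^k * 2^K = (2:ℚ)^(K-k) := by
  have h2 : (2:ℚ)^k * (2:ℚ)^(K-k) = 2^K := by
    rw [← pow_add]; congr 1; omega
  have hk : (0:ℚ) < 2^k := by positivity
  field_simp
  rw [← h2, ← mul_assoc, ← mul_pow]; norm_num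

private lemma sum_int (K : ℕ) : ∀ l : Multiset ℕ, (∀ k ∈ l, k ≤ K) →
    ∃ a : ℤ, (l.map fun k => ((1:ℚ)/2)^k).sum * 2^K = (a:ℚ) := by
  intro l
  induction l using Multiset.induction with
  | empty => intro _; exact ⟨0, by simp⟩
  | cons k t ih =>
    intro h
    obtain ⟨a, ha⟩ := ih (fun x hx => h x (Multiset.mem_cons_of_mem hx))
    refine ⟨2^(K-k) + a, ?_⟩
    rw [Multiset.map_cons, Multiset.sum_cons, add_mul, ha,
      term_eq k K (h k (Multiset.mem_cons_self k t))]
    push_cast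
    ring

private lemma sum_shift (n : ℕ) : ∀ l : Multiset ℕ, (∀ j ∈ l, j < n) →
    ((l.map fun j => ((1:ℚ)/2)^(n-j)).sum) * 2^n = (((l.map fun j => (2:ℤ)^j).sum : ℤ) : ℚ) := by
  intro l
  induction l using Multiset.induction with
  | empty => intro _; simp
  | cons j t ih =>
    intro h
    have hj : j < n := h j (Multiset.mem_cons_self j t)
    have := ih (fun x hx => h x (Multiset.mem_cons_of_mem hx))
    rw [Multiset.map_cons, Multiset.sum_cons, add_mul, this,
      term_eq (n - j) n (by omega)]
    have : n - (n - j) = j := by omega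
    rw [this, Multiset.map_cons, Multiset.sum_cons]
    push_cast
    ring

private lemma key (ρ : ℚ) (hρ0 : 0 < ρ) : ∀ s : ℕ, ∃ η : ℚ, 0 < η ∧ η ≤ ρ ∧
    ∀ l : Multiset ℕ, l.card ≤ s →
      (l.map fun k => ((1:ℚ)/2)^k).sum < ρ →
      (l.map fun k => ((1:ℚ)/2)^k).sum ≤ ρ - η := by
  intro s
  induction s with
  | zero =>
    refine ⟨ρ, hρ0, le_refl _, ?_⟩
    intro l hcard _
    have : l = 0 := Multiset.card_eq_zero.mp (Nat.le_zero.mp hcard)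
    simp [this]
  | succ s ih =>
    obtain ⟨η, hη0, hηρ, hkey⟩ := ih
    obtain ⟨K, hK⟩ := exists_pow_lt_of_lt_one (by positivity : (0:ℚ) < η/2)
      (by norm_num : (1:ℚ)/2 < 1)
    have hden : (0:ℚ) < (ρ.den : ℚ) := by
      exact_mod_cast ρ.pos
    refine ⟨min (η/2) (1/((ρ.den:ℚ) * 2^K)), ?_, ?_, ?_⟩
    · apply lt_min (by positivity) (by positivity)
    · calc min (η/2) (1/((ρ.den:ℚ) * 2^K)) ≤ η/2 := min_le_left _ _
        _ ≤ ρ := by linarith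
    · intro l hcard hlt
      by_cases hall : ∀ k ∈ l, k ≤ K
      · -- all exponents small: integrality argument
        obtain ⟨a, ha⟩ := sum_int K l hall
        set x := (l.map fun k => ((1:ℚ)/2)^k).sum with hx
        have hP : (0:ℚ) < 2^K := by positivity
        have hnum : (ρ.num : ℚ) = ρ * ρ.den := (Rat.mul_den_eq_num ρ).symm
        have hZ : a * ρ.den < ρ.num * 2^K := by
          have hq : (a:ℚ) * ρ.den < (ρ.num:ℚ) * 2^K := by
            rw [← ha, hnum]
            nlinarith [mul_lt_mul_of_pos_right hlt (mul_pos hden hP)]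
          exact_mod_cast hq
        have hZ' : a * ρ.den + 1 ≤ ρ.num * 2^K := hZ
        have hq' : (a:ℚ) * ρ.den + 1 ≤ (ρ.num:ℚ) * 2^K := by exact_mod_cast hZ'
        have hxρ : x ≤ ρ - 1/((ρ.den:ℚ) * 2^K) := by
          rw [sub_eq_add_neg, ← sub_le_iff_le_add, ← sub_eq_add_neg] at *
          have h1 : (1:ℚ)/((ρ.den:ℚ) * 2^K) ≤ ρ - x := by
            rw [div_le_iff₀ (by positivity)]
            have : (a:ℚ) = x * 2^K := ha.symm
            rw [hnum] at hq'
            nlinarith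
          linarith
        calc x ≤ ρ - 1/((ρ.den:ℚ) * 2^K) := hxρ
          _ ≤ ρ - min (η/2) (1/((ρ.den:ℚ) * 2^K)) := by
              have := min_le_right (η/2) (1/((ρ.den:ℚ) * 2^K))
              linarith
      · -- some exponent is large: drop it and use the IH
        push_neg at hall
        obtain ⟨k, hkmem, hkK⟩ := hall
        obtain ⟨t, rfl⟩ := Multiset.exists_cons_of_mem hkmem
        rw [Multiset.map_cons, Multiset.sum_cons] at hlt ⊢
        have hpos : (0:ℚ) < ((1:ℚ)/2)^k := by positivity
        have hcard' : t.card ≤ s := by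
          rw [Multiset.card_cons] at hcard; omega
        have hlt' : (t.map fun k => ((1:ℚ)/2)^k).sum < ρ := by linarith
        have ht := hkey t hcard' hlt'
        have hsmall : ((1:ℚ)/2)^k ≤ η/4 := by
          have h1 : ((1:ℚ)/2)^k ≤ ((1:ℚ)/2)^(K+1) :=
            pow_le_pow_of_le_one (by norm_num) (by norm_num) (by omega)
          have h2 : ((1:ℚ)/2)^(K+1) = ((1:ℚ)/2)^K * (1/2) := by ring
          nlinarith [hK]
        have hmin := min_le_left (η/2) (1/((ρ.den:ℚ) * 2^K))
        linarith

/-- For every rational `ρ ∈ (0,1)` and positive integer `m` there is `η > 0` such that for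
all `n ≥ 1` and every integer `N` which is a sum of at most `m` powers of two:
if `N < ρ·2^n` then `N ≤ (ρ - η)·2^n`. -/
theorem stmt6 (ρ : ℚ) (hρ0 : 0 < ρ) (hρ1 : ρ < 1) (m : ℕ) (hm : 1 ≤ m) :
    ∃ η : ℝ, 0 < η ∧ ∀ n : ℕ, 1 ≤ n → ∀ N : ℤ, IsSumOfPowsTwo m N →
      (N : ℝ) < (ρ : ℝ) * 2^n → (N : ℝ) ≤ ((ρ : ℝ) - η) * 2^n := by
  obtain ⟨η, hη0, hηρ, hkey⟩ := key ρ hρ0 m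
  refine ⟨(η:ℝ), by exact_mod_cast hη0, ?_⟩
  intro n hn N hN hlt
  obtain ⟨l, hcard, rfl⟩ := hN
  set N : ℤ := (l.map fun j => (2:ℤ)^j).sum with hNdef
  have hQ : (N:ℚ) < ρ * 2^n := by exact_mod_cast hlt
  have hN2n : (N:ℚ) < 2^n := by
    have : ρ * 2^n < 1 * 2^n := by
      apply mul_lt_mul_of_pos_right hρ1 (by positivity)
    linarith [hQ, this]
  have hjn : ∀ j ∈ l, j < n := by
    intro j hj
    have h1 : (2:ℤ)^j ≤ N := by
      apply Multiset.single_le_sum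
      · intro x hx
        obtain ⟨j', _, rfl⟩ := Multiset.mem_map.mp hx
        positivity
      · exact Multiset.mem_map_of_mem _ hj
    have h2 : ((2:ℤ)^j : ℚ) < 2^n := by
      calc ((2:ℤ)^j : ℚ) ≤ (N:ℚ) := by exact_mod_cast h1
        _ < 2^n := hN2n
    have h3 : (2:ℚ)^j < 2^n := by push_cast at h2; exact h2
    exact (pow_lt_pow_iff_right₀ (by norm_num : (1:ℚ) < 2)).mp h3
  have hsum := sum_shift n l hjn
  set x := (l.map fun j => ((1:ℚ)/2)^(n-j)).sum with hxdef
  have hxlt : x < ρ := by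
    have h2 : x * 2^n < ρ * 2^n := by rw [hsum]; exact hQ
    exact lt_of_mul_lt_mul_right h2 (by positivity)
  have hcard' : (l.map fun j => n - j).card ≤ m := by
    rw [Multiset.card_map]; exact hcard
  have hx' : ((l.map fun j => n - j).map fun k => ((1:ℚ)/2)^k).sum = x := by
    rw [Multiset.map_map]; rfl
  have hle : x ≤ ρ - η := by
    have := hkey (l.map fun j => n - j) hcard' (by rw [hx']; exact hxlt)
    rwa [hx'] at this
  have hfin : (N:ℚ) ≤ (ρ - η) * 2^n := by
    rw [← hsum]
    apply mul_le_mul_of_nonneg_right hle (by positivity)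
  exact_mod_cast hfin
end

section
/- Let ρ = a/b ∈ (0,1) with a, b positive integers and gcd(a,b) = 1, and let m be a positive integer. Then for every positive integer n and every integer N that is a sum of at most m powers of two: if N < ρ·2^n, then N ≤ ρ·(1 − 2^{−(b−1)m})·2^n. -/
lemma aux_pow (b : ℕ) (hb : 3 ≤ b) : b + 1 ≤ 2^(b-1) := by
  induction b, hb using Nat.le_induction with
  | base => norm_num
  | succ k hk ih =>
    have h1 : k + 1 + 1 ≤ 2 * (k + 1) := by omega
    have h2 : 2 * (k + 1) ≤ 2 * 2^(k-1) := by omega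
    have h3 : 2 * 2^(k-1) = 2^(k+1-1) := by
      rw [← pow_succ']
      congr 1
      omega
    omega

lemma key_s7 (a b : ℕ) (ha : 0 < a) (hlt : a < b) :
    ∀ (L : List ℕ), L.Pairwise (· ≤ ·) → ∀ n : ℕ,
      (b : ℤ) * (L.map (fun j => (2:ℤ)^j)).sum < (a : ℤ) * 2^n →
      (a : ℤ) * 2^n ≤ 2^((b-1)*L.length) * ((a:ℤ) * 2^n - (b:ℤ) * (L.map (fun j => (2:ℤ)^j)).sum) := by
  intro L
  induction L with
  | nil => intro _ n h; simp
  | cons j L ih =>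
    intro hsort n hlt2
    have hsort' : L.Pairwise (· ≤ ·) := hsort.of_cons
    have hmem : ∀ j' ∈ L, j ≤ j' := fun j' hj' => (List.pairwise_cons.mp hsort).1 j' hj'
    set S' : ℤ := (L.map (fun j => (2:ℤ)^j)).sum with hS'
    have hsum : ((j :: L).map (fun j => (2:ℤ)^j)).sum = 2^j + S' := by simp [hS']
    have hS'nonneg : 0 ≤ S' := by
      apply List.sum_nonneg
      intro x hx
      simp only [List.mem_map] at hx
      obtain ⟨y, _, rfl⟩ := hx
      positivity
    have hdvdS' : (2:ℤ)^j ∣ S' := by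
      apply List.dvd_sum
      intro x hx
      simp only [List.mem_map] at hx
      obtain ⟨y, hy, rfl⟩ := hx
      exact pow_dvd_pow 2 (hmem y hy)
    rw [hsum] at hlt2
    -- j < n
    have hb2 : (2:ℕ) ≤ b := by omega
    have hjn : j < n := by
      have h1 : (b:ℤ) * 2^j ≤ (b:ℤ) * (2^j + S') := by nlinarith
      have h2 : (a:ℤ) * 2^n < (b:ℤ) * 2^n := by
        have : (a:ℤ) < b := by exact_mod_cast hlt
        have : (0:ℤ) < 2^n := by positivity
        nlinarith
      have h3 : (b:ℤ) * 2^j < (b:ℤ) * 2^n := by linarith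
      have h4 : (2:ℤ)^j < 2^n := by
        have hbpos : (0:ℤ) < b := by exact_mod_cast (by omega : 0 < b)
        exact lt_of_mul_lt_mul_left h3 (le_of_lt hbpos)
      exact (pow_lt_pow_iff_right₀ (by norm_num : (1:ℤ) < 2)).mp h4
    set D : ℤ := (a:ℤ) * 2^n - (b:ℤ) * (2^j + S') with hD
    have hDpos : 0 < D := by simp [hD]; linarith
    have hdvdD : (2:ℤ)^j ∣ D := by
      apply dvd_sub
      · exact Dvd.dvd.mul_left (pow_dvd_pow 2 (le_of_lt hjn)) _
      · exact Dvd.dvd.mul_left (Dvd.dvd.add (dvd_refl _) hdvdS') _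
    -- crucial step: b * 2^j ≤ (2^(b-1) - 1) * D
    have hstep : (b:ℤ) * 2^j ≤ (2^(b-1) - 1) * D := by
      rcases eq_or_lt_of_le hb2 with hb2' | hb3
      · -- b = 2, hence a = 1
        have hbeq : b = 2 := hb2'.symm
        have hbZ : (b:ℤ) = 2 := by rw [hbeq]; norm_num
        have hdvd2 : (2:ℤ)^(j+1) ∣ D := by
          rw [hD]
          apply dvd_sub
          · exact Dvd.dvd.mul_left (pow_dvd_pow (2:ℤ) (by omega : j + 1 ≤ n)) _
          · obtain ⟨c, hc⟩ := hdvdS'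
            exact ⟨1 + c, by rw [hbZ, hc]; ring⟩
        have hge : (2:ℤ)^(j+1) ≤ D := Int.le_of_dvd hDpos hdvd2
        have hco : (2:ℤ)^(b-1) - 1 = 1 := by rw [hbeq]; norm_num
        have h2 : (2:ℤ)^(j+1) = 2 * 2^j := by ring
        rw [hbZ, hco]
        linarith
      · -- b ≥ 3
        have hge : (2:ℤ)^j ≤ D := Int.le_of_dvd hDpos hdvdD
        have hb1 : (b:ℤ) + 1 ≤ 2^(b-1) := by
          have := aux_pow b hb3
          exact_mod_cast this
        have h2j : (0:ℤ) < 2^j := by positivity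
        nlinarith
    -- apply IH
    have hlt3 : (b:ℤ) * S' < (a:ℤ) * 2^n := by
      have : (0:ℤ) < 2^j := by positivity
      have hbpos : (0:ℤ) < b := by exact_mod_cast (by omega : 0 < b)
      nlinarith
    have hIH := ih hsort' n hlt3
    -- combine
    have hcomb : (a:ℤ) * 2^n - (b:ℤ) * S' ≤ 2^(b-1) * D := by
      have : (a:ℤ) * 2^n - (b:ℤ) * S' = D + (b:ℤ) * 2^j := by simp [hD]; ring
      rw [this]
      linarith
    rw [hsum]
    have hlen : (b-1) * (j :: L).length = (b-1) * L.length + (b-1) := by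
      simp [List.length_cons]; ring
    rw [hlen, pow_add]
    have hpow_pos : (0:ℤ) < 2^((b-1)*L.length) := by positivity
    calc (a:ℤ) * 2^n ≤ 2^((b-1)*L.length) * ((a:ℤ) * 2^n - (b:ℤ) * S') := hIH
      _ ≤ 2^((b-1)*L.length) * (2^(b-1) * D) := by
          apply mul_le_mul_of_nonneg_left hcomb (le_of_lt hpow_pos)
      _ = 2^((b-1)*L.length) * 2^(b-1) * D := by ring

/-- Effective version: for `ρ = a/b ∈ (0,1)` in lowest terms and `m ≥ 1`, every integer `N`
which is a sum of at most `m` powers of two with `N < ρ·2^n` satisfies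
`N ≤ ρ·(1 - 2^{-(b-1)m})·2^n`. -/
theorem stmt7 (a b : ℕ) (ha : 0 < a) (hb : 0 < b) (hab : Nat.gcd a b = 1) (hlt : a < b)
    (m : ℕ) (hm : 1 ≤ m) :
    ∀ n : ℕ, 1 ≤ n → ∀ N : ℤ, IsSumOfPowsTwo m N →
      (N : ℝ) < ((a : ℝ) / b) * 2^n →
      (N : ℝ) ≤ ((a : ℝ) / b) * (1 - ((2 : ℝ)^((b - 1) * m))⁻¹) * 2^n := by
  intro n hn N hN hNlt
  obtain ⟨l, hcard, hNsum⟩ := hN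
  set L : List ℕ := l.sort (· ≤ ·) with hL
  have hsorted : L.Pairwise (· ≤ ·) := l.pairwise_sort _
  have hlen : L.length = l.card := l.length_sort _
  have hsum_eq : N = (L.map (fun j => (2:ℤ)^j)).sum := by
    rw [hNsum]
    have : (L : Multiset ℕ) = l := l.sort_eq _
    rw [← this]
    simp
  -- convert real hypothesis to integer
  have hbR : (0:ℝ) < b := by exact_mod_cast hb
  have hZR : (N:ℝ) * b < (a:ℝ) * 2^n := by
    rw [div_mul_eq_mul_div, lt_div_iff₀ hbR] at hNlt
    linarith
  have hZ : (b:ℤ) * N < (a:ℤ) * 2^n := by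
    have : ((b:ℤ) * N : ℤ) = ((N * b : ℤ)) := by ring
    exact_mod_cast (by push_cast; linarith : ((b:ℤ) * N : ℝ) < ((a:ℤ) * 2^n : ℝ))
  have hkey := key_s7 a b ha hlt L hsorted n (by rw [← hsum_eq]; exact hZ)
  rw [← hsum_eq] at hkey
  -- strengthen exponent to (b-1)*m
  set K : ℕ := (b-1) * m with hK
  have hDpos : 0 < (a:ℤ) * 2^n - (b:ℤ) * N := by linarith
  have hexp : (b-1) * L.length ≤ K := by
    rw [hK]
    exact Nat.mul_le_mul_left _ (hlen ▸ hcard)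
  have hkey2 : (a:ℤ) * 2^n ≤ 2^K * ((a:ℤ) * 2^n - (b:ℤ) * N) := by
    calc (a:ℤ) * 2^n ≤ 2^((b-1)*L.length) * ((a:ℤ) * 2^n - (b:ℤ) * N) := hkey
      _ ≤ 2^K * ((a:ℤ) * 2^n - (b:ℤ) * N) := by
          apply mul_le_mul_of_nonneg_right _ (le_of_lt hDpos)
          exact pow_le_pow_right₀ (by norm_num) hexp
  -- back to reals
  have hkeyR : (a:ℝ) * 2^n ≤ 2^K * ((a:ℝ) * 2^n - (b:ℝ) * N) := by exact_mod_cast hkey2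
  have hKpos : (0:ℝ) < 2^K := by positivity
  rw [div_mul_eq_mul_div, div_mul_eq_mul_div, le_div_iff₀ hbR]
  have expand : (a:ℝ) * (1 - ((2:ℝ)^K)⁻¹) * 2^n = (a:ℝ) * 2^n - (a:ℝ) * 2^n / 2^K := by
    field_simp
  rw [expand]
  have h1 : (a:ℝ) * 2^n / 2^K ≤ (a:ℝ) * 2^n - (b:ℝ) * N := by
    rw [div_le_iff₀ hKpos]
    nlinarith
  nlinarith
end

section
/- Let v and m be positive integers and let n ≥ v be an integer. Then for every integer N that is a sum of at most m powers of two: if N < 2^{n−v}, then N ≤ 2^{n−v} − 2^{n−v−m} (where the right-hand side is interpreted as a real number). -/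
/-- Any multiset representation as sum of powers of two reduces to a representation with
distinct exponents and no more terms. -/
lemma sumPows_reduce (c : ℕ) : ∀ l : Multiset ℕ, l.card = c →
    ∃ S : Finset ℕ, S.card ≤ c ∧ (∑ j ∈ S, (2:ℕ)^j) = (l.map (fun j => (2:ℕ)^j)).sum := by
  induction c with
  | zero =>
    intro l hl
    rw [Multiset.card_eq_zero] at hl
    exact ⟨∅, by simp, by simp [hl]⟩
  | succ c ih =>
    intro l hl
    by_cases hnd : l.Nodup
    · refine ⟨l.toFinset, ?_, ?_⟩
      · rw [Multiset.toFinset_card_of_nodup hnd, hl]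
      · rw [Finset.sum]
        rw [Multiset.toFinset_val, Multiset.dedup_eq_self.mpr hnd]
    · rw [Multiset.nodup_iff_count_le_one] at hnd
      push_neg at hnd
      obtain ⟨j, hj⟩ := hnd
      have hj2 : 2 ≤ l.count j := hj
      have hjmem : j ∈ l := Multiset.count_pos.mp (by omega)
      have hjmem2 : j ∈ l.erase j := by
        rw [← Multiset.count_pos, Multiset.count_erase_self]; omega
      set l' : Multiset ℕ := (j+1) ::ₘ ((l.erase j).erase j) with hl'
      have hcount := Multiset.count_le_card j l
      have hcard : l'.card = c := by
        simp only [hl', Multiset.card_cons, Multiset.card_erase_of_mem hjmem2,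
          Multiset.card_erase_of_mem hjmem, Nat.pred_eq_sub_one, hl]
        omega
      obtain ⟨S, hS1, hS2⟩ := ih l' hcard
      refine ⟨S, hS1.trans (Nat.le_succ c), hS2.trans ?_⟩
      have e1 : l = j ::ₘ l.erase j := (Multiset.cons_erase hjmem).symm
      have e2 : l.erase j = j ::ₘ (l.erase j).erase j := (Multiset.cons_erase hjmem2).symm
      conv_rhs => rw [e1, e2]
      simp only [hl', Multiset.map_cons, Multiset.sum_cons]
      rw [pow_succ]
      ring

/-- Sum of distinct powers of two with exponents `< k` is `< 2^k`. -/
lemma sumPows_lt (k : ℕ) (S : Finset ℕ) (hS : S ⊆ Finset.range k) :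
    (∑ j ∈ S, (2:ℕ)^j) + 1 ≤ 2^k := by
  have h2 : ∀ t : ℕ, ∑ j ∈ Finset.range t, (2:ℕ)^j = 2^t - 1 := by
    intro t
    induction t with
    | zero => simp
    | succ t iht =>
      rw [Finset.sum_range_succ, iht, pow_succ]
      have : 1 ≤ (2:ℕ)^t := Nat.one_le_two_pow
      omega
  have h1 : (∑ j ∈ S, (2:ℕ)^j) ≤ ∑ j ∈ Finset.range k, (2:ℕ)^j :=
    Finset.sum_le_sum_of_subset hS
  have : 1 ≤ (2:ℕ)^k := Nat.one_le_two_pow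
  rw [h2 k] at h1
  omega

/-- Key bound: a sum of at most `m` distinct powers of two with exponents `< k`
is at most `2^k - 2^(k-m)` (ℕ-subtraction). -/
lemma sumPows_bound : ∀ (k m : ℕ) (S : Finset ℕ), S.card ≤ m → S ⊆ Finset.range k →
    (∑ j ∈ S, (2:ℕ)^j) + 2^(k - m) ≤ 2^k := by
  intro k
  induction k with
  | zero =>
    intro m S _ hS
    have : S = ∅ := by simpa using Finset.subset_empty.mp (by simpa using hS)
    simp [this]
  | succ k ih =>
    intro m S hcard hS
    match m with
    | 0 =>
      have hS0 : S = ∅ := Finset.card_eq_zero.mp (Nat.le_zero.mp hcard)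
      simp [hS0]
    | m + 1 =>
      by_cases hk : k ∈ S
      · have hSe : S.erase k ⊆ Finset.range k := by
          intro x hx
          have hx1 := Finset.mem_of_mem_erase hx
          have hx2 := Finset.ne_of_mem_erase hx
          have := Finset.mem_range.mp (hS hx1)
          exact Finset.mem_range.mpr (by omega)
        have hce : (S.erase k).card ≤ m := by
          have := Finset.card_erase_of_mem hk
          omega
        have ihk := ih m (S.erase k) hce hSe
        have hsum : ∑ j ∈ S, (2:ℕ)^j = 2^k + ∑ j ∈ S.erase k, (2:ℕ)^j := by
          rw [← Finset.sum_erase_add S _ hk]; ring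
        have hexp : k + 1 - (m + 1) = k - m := by omega
        rw [hsum, hexp, pow_succ]
        omega
      · have hS' : S ⊆ Finset.range k := by
          intro x hx
          have := Finset.mem_range.mp (hS hx)
          have hxk : x ≠ k := fun h => hk (h ▸ hx)
          exact Finset.mem_range.mpr (by omega)
        have h1 := sumPows_lt k S hS'
        have hexp : k + 1 - (m + 1) = k - m := by omega
        have h2 : (2:ℕ)^(k - m) ≤ 2^k := Nat.pow_le_pow_right (by norm_num) (by omega)
        rw [hexp, pow_succ]
        omega

/-- For positive integers `v, m` and `n ≥ v`: every integer `N` which is a sum of at most `m`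
powers of two with `N < 2^{n-v}` satisfies `N ≤ 2^{n-v} - 2^{n-v-m}` (over the reals). -/
theorem stmt8 (v m : ℕ) (hv : 0 < v) (hm : 0 < m) (n : ℕ) (hn : v ≤ n) :
    ∀ N : ℤ, IsSumOfPowsTwo m N →
      (N : ℝ) < (2 : ℝ)^((n : ℤ) - v) →
      (N : ℝ) ≤ (2 : ℝ)^((n : ℤ) - v) - (2 : ℝ)^((n : ℤ) - v - m) := by
  intro N hN hlt
  obtain ⟨l, hcard, hsum⟩ := hN
  set k : ℕ := n - v with hk
  have hkz : (n : ℤ) - v = (k : ℤ) := by push_cast [hk]; omega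
  -- rewrite N as a natural number M
  set M : ℕ := (l.map (fun j => (2:ℕ)^j)).sum with hM
  have hNM : N = (M : ℤ) := by
    rw [hsum, hM]
    push_cast
    rw [Multiset.map_map]
    norm_num
  -- get distinct representation
  obtain ⟨S, hS1, hS2⟩ := sumPows_reduce l.card l rfl
  have hScard : S.card ≤ m := hS1.trans hcard
  -- M < 2^k as naturals
  have hMk : M < 2^k := by
    have h' : (N : ℝ) < (2:ℝ)^(k:ℤ) := by rw [← hkz]; exact hlt
    rw [zpow_natCast, hNM] at h'
    exact_mod_cast h'
  -- each exponent in S is < k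
  have hSrange : S ⊆ Finset.range k := by
    intro j hj
    have h2j : (2:ℕ)^j ≤ ∑ i ∈ S, (2:ℕ)^i :=
      Finset.single_le_sum (fun i _ => Nat.zero_le _) hj
    rw [hS2] at h2j
    have : (2:ℕ)^j ≤ M := le_of_le_of_eq h2j hM.symm
    have hjk : (2:ℕ)^j < 2^k := lt_of_le_of_lt this hMk
    exact Finset.mem_range.mpr (Nat.pow_lt_pow_iff_right (by norm_num) |>.mp hjk)
  have hbound : M + 2^(k - m) ≤ 2^k := by
    have hb := sumPows_bound k m S hScard hSrange
    rw [hS2, ← hM] at hb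
    exact hb
  rw [hNM, hkz]
  push_cast
  rcases le_or_gt m k with hmk | hmk
  · -- exact case: (k:ℤ) - m = (k - m : ℕ)
    have hexp : (k : ℤ) - m = ((k - m : ℕ) : ℤ) := by push_cast; omega
    rw [hexp, zpow_natCast, zpow_natCast]
    push_cast
    have : (M : ℝ) + (2:ℝ)^(k-m) ≤ (2:ℝ)^k := by exact_mod_cast hbound
    linarith
  · -- m > k: 2^((k:ℤ)-m) ≤ 1 and M + 1 ≤ 2^k
    have h1 : (2:ℝ)^((k:ℤ) - m) ≤ 1 := by
      apply zpow_le_one_of_nonpos₀ (by norm_num)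
      omega
    have h2 : M + 1 ≤ 2^k := by
      have : k - m = 0 := by omega
      rw [this, pow_zero] at hbound
      exact hbound
    have h3 : (M : ℝ) + 1 ≤ (2:ℝ)^(k:ℤ) := by
      rw [zpow_natCast]; exact_mod_cast h2
    linarith
end

section
/- Let Z and Q be positive integers and let F be a 3-CNF formula on n variables. Then at least one of the following holds: (i) F contains a 0-sunflower (i.e., a variable-disjoint set of clauses) of size Z; (ii) F contains a 1-sunflower of size Q; (iii) there exist m ≤ 7^Z · 3^{3ZQ} 1-CNF formulas F_1, …, F_m on the same n variables such that #SAT(F) = Σ_{i=1}^m #SAT(F_i). -/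
/-! ### Auxiliary development -/

open Finset
attribute [local instance] Classical.propDecidable

namespace Stmt9Aux
variable {n : ℕ}

/-- literals induced by an assignment on a variable set -/
def lits (A : Fin n → Bool) (W : Finset (Fin n)) : Clause n := W.image (fun x => (x, A x))

lemma mem_lits {A : Fin n → Bool} {W : Finset (Fin n)} {l : Lit n} :
    l ∈ lits A W ↔ l.1 ∈ W ∧ A l.1 = l.2 := by
  unfold lits
  simp only [mem_image]
  constructor
  · rintro ⟨x, hx, rfl⟩; exact ⟨hx, rfl⟩
  · rintro ⟨h1, h2⟩; exact ⟨l.1, h1, by rw [h2]⟩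

lemma mem_clVars {C : Clause n} {x : Fin n} : x ∈ clVars C ↔ ∃ l ∈ C, l.1 = x := by
  simp [clVars, mem_image]

lemma clVars_lits {A : Fin n → Bool} {W : Finset (Fin n)} : clVars (lits A W) = W := by
  ext x; simp [clVars, lits, mem_image]

lemma distinct_lits {A : Fin n → Bool} {W : Finset (Fin n)} : distinctVars (lits A W) := by
  intro l hl l' hl' h
  rw [mem_lits] at hl hl'
  have h2 : l.2 = l'.2 := by rw [← hl.2, ← hl'.2, h]
  exact Prod.ext h h2

lemma eq_lits {A : Fin n → Bool} {E : Clause n} {W : Finset (Fin n)}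
    (hv : clVars E = W) (hg : ∀ l ∈ E, A l.1 = l.2) : E = lits A W := by
  ext l
  rw [mem_lits]
  constructor
  · intro hl
    exact ⟨hv ▸ (mem_clVars.2 ⟨l, hl, rfl⟩), hg l hl⟩
  · rintro ⟨h1, h2⟩
    rw [← hv, mem_clVars] at h1
    obtain ⟨l', hl', hfst⟩ := h1
    have : l' = l := by
      have := hg l' hl'
      refine Prod.ext hfst ?_
      rw [← this, ← h2, hfst]
    exact this ▸ hl'

lemma lits_congr {A A' : Fin n → Bool} {W : Finset (Fin n)} (h : ∀ x ∈ W, A x = A' x) :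
    lits A W = lits A' W := by
  unfold lits
  exact image_congr (fun x hx => by rw [h x hx])

lemma card_eq_card_clVars {E : Clause n} (hd : distinctVars E) : E.card = (clVars E).card :=
  (Finset.card_image_of_injOn (fun l hl l' hl' h => hd l hl l' hl' h)).symm

/-- a "local satisfying assignment" for clause `C`, represented as a set of literals -/
def IsLocalSat (C : Clause n) (E : Clause n) : Prop :=
  clVars E = clVars C ∧ distinctVars E ∧ ∃ l ∈ C, l ∈ E

lemma graph_repr {E : Clause n} (hd : distinctVars E) :
    E = lits (fun x => decide ((x, true) ∈ E)) (clVars E) := by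
  refine eq_lits rfl ?_
  rintro ⟨x, b⟩ hl
  cases b with
  | true => simpa using hl
  | false =>
    simp only [decide_eq_false_iff_not]
    intro hmem
    have := hd _ hmem _ hl rfl
    simp at this

lemma trueSet_inj {E E' : Clause n} (hdE : distinctVars E) (hdE' : distinctVars E')
    (hvE : clVars E = clVars E')
    (h : ∀ x, (x, true) ∈ E ↔ (x, true) ∈ E') : E = E' := by
  rw [graph_repr hdE, graph_repr hdE', hvE]
  exact lits_congr (fun x _ => by simp [h x])

lemma card_isLocalSat_le (C : Clause n) (k : ℕ) (hk : C.card ≤ k) :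
    Nat.card {E : Clause n // IsLocalSat C E} ≤ 2 ^ k - 1 := by
  rw [Nat.card_eq_fintype_card, Fintype.card_subtype]
  set W := clVars C with hW
  set ts : Clause n → Finset (Fin n) := fun E => W.filter (fun x => (x, true) ∈ E) with hts
  have hinj : Set.InjOn ts (univ.filter (IsLocalSat C) : Finset (Clause n)) := by
    intro E hE E' hE' heq
    simp only [coe_filter, Set.mem_setOf_eq, mem_coe, mem_univ, true_and] at hE hE'
    refine trueSet_inj hE.2.1 hE'.2.1 (hE.1.trans hE'.1.symm) (fun x => ?_)
    by_cases hx : x ∈ W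
    · constructor
      · intro hh
        have : x ∈ ts E := mem_filter.2 ⟨hx, hh⟩
        rw [heq] at this
        exact (mem_filter.1 this).2
      · intro hh
        have : x ∈ ts E' := mem_filter.2 ⟨hx, hh⟩
        rw [← heq] at this
        exact (mem_filter.1 this).2
    · constructor
      · intro hh
        have h3 : x ∈ clVars E := mem_image_of_mem Prod.fst hh
        rw [hE.1] at h3
        exact absurd h3 hx
      · intro hh
        have h3 : x ∈ clVars E' := mem_image_of_mem Prod.fst hh
        rw [hE'.1] at h3
        exact absurd h3 hx
  rcases eq_or_ne C ∅ with rfl | hCne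
  · have : (univ.filter (IsLocalSat (∅ : Clause n))) = ∅ := by
      ext E
      simp [IsLocalSat]
    rw [this, card_empty]
    exact Nat.zero_le _
  · have hk1 : 1 ≤ k := le_trans (Finset.card_pos.2 (nonempty_iff_ne_empty.2 hCne)) hk
    by_cases hinjC : Set.InjOn Prod.fst (C : Set (Lit n))
    · set badT : Finset (Fin n) := (C.filter (fun l => l.2 = false)).image Prod.fst with hbadT
      have hbadmem : badT ∈ W.powerset := mem_powerset.2 (image_subset_image (filter_subset _ _))
      have hmaps : ∀ E ∈ (univ.filter (IsLocalSat C) : Finset (Clause n)),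
          ts E ∈ W.powerset.erase badT := by
        intro E hE
        simp only [mem_filter, mem_univ, true_and] at hE
        obtain ⟨hv, hd, l, hlC, hlE⟩ := hE
        refine mem_erase.2 ⟨?_, mem_powerset.2 (filter_subset _ _)⟩
        cases hb : l.2 with
        | true =>
          intro heq
          have h1 : l.1 ∈ ts E := mem_filter.2 ⟨mem_image_of_mem Prod.fst hlC, by rwa [← hb, Prod.mk.eta]⟩
          rw [heq] at h1
          obtain ⟨l', hl', hfst⟩ := mem_image.1 h1
          have := hinjC (mem_filter.1 hl').1 hlC hfst
          rw [this] at hl'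
          have h4 := (mem_filter.1 hl').2
          rw [hb] at h4
          simp at h4
        | false =>
          intro heq
          have h1 : l.1 ∈ badT := mem_image_of_mem Prod.fst (mem_filter.2 ⟨hlC, hb⟩)
          rw [← heq] at h1
          have h2 : (l.1, true) ∈ E := (mem_filter.1 h1).2
          have h5 := hd _ h2 _ hlE rfl
          have hsnd := congrArg Prod.snd h5
          rw [hb] at hsnd
          simp at hsnd
      calc (univ.filter (IsLocalSat C)).card ≤ (W.powerset.erase badT).card :=
            card_le_card_of_injOn ts hmaps hinj
        _ = 2 ^ W.card - 1 := by rw [card_erase_of_mem hbadmem, card_powerset]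
        _ ≤ 2 ^ k - 1 := by
            refine Nat.sub_le_sub_right (Nat.pow_le_pow_right (by norm_num) ?_) 1
            calc W.card ≤ C.card := card_image_le
              _ ≤ k := hk
    · have hWlt : W.card < C.card := lt_of_le_of_ne card_image_le (fun hcc => hinjC (card_image_iff.1 hcc))
      have hmaps : ∀ E ∈ (univ.filter (IsLocalSat C) : Finset (Clause n)), ts E ∈ W.powerset :=
        fun E _ => mem_powerset.2 (filter_subset _ _)
      calc (univ.filter (IsLocalSat C)).card ≤ W.powerset.card :=
            card_le_card_of_injOn ts hmaps hinj
        _ = 2 ^ W.card := card_powerset _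
        _ ≤ 2 ^ k - 1 := Nat.le_sub_one_of_lt (Nat.pow_lt_pow_right (by norm_num) (lt_of_lt_of_le hWlt hk))

lemma exists_maximal_subset {α : Type*} [DecidableEq α] (A : Finset α) (p : Finset α → Prop)
    (h0 : p ∅) : ∃ T, T ⊆ A ∧ p T ∧ ∀ x ∈ A, x ∉ T → ¬ p (insert x T) := by
  obtain ⟨T, hT, hmax⟩ := Finset.exists_max_image (A.powerset.filter p) Finset.card
    ⟨∅, mem_filter.2 ⟨mem_powerset.2 (empty_subset _), h0⟩⟩
  simp only [mem_filter, mem_powerset] at hT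
  refine ⟨T, hT.1, hT.2, fun x hx hxT hp => ?_⟩
  have hmem : insert x T ∈ A.powerset.filter p :=
    mem_filter.2 ⟨mem_powerset.2 (insert_subset hx hT.1), hp⟩
  have := hmax _ hmem
  rw [card_insert_of_notMem hxT] at this
  omega

lemma numSat_eq_sum {F : Cnf n} {I : Type} [Fintype I] (G : I → Cnf n)
    (sig : (Fin n → Bool) → I)
    (h1 : ∀ A, cnfSat A F → cnfSat A (G (sig A)))
    (h2 : ∀ i A, cnfSat A (G i) → cnfSat A F ∧ sig A = i) :
    numSat F = ∑ i : I, numSat (G i) := by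
  have hn : ∀ (H : Cnf n), numSat H = (univ.filter (fun A => cnfSat A H)).card := fun H => by
    rw [numSat, Nat.card_eq_fintype_card, Fintype.card_subtype]
  rw [hn]
  have := Finset.card_eq_sum_card_fiberwise (f := sig) (s := univ.filter (fun A => cnfSat A F))
    (t := univ) (fun x _ => mem_univ _)
  rw [this]
  refine Finset.sum_congr rfl fun i _ => ?_
  rw [hn]
  congr 1
  ext A
  simp only [mem_filter, mem_univ, true_and]
  constructor
  · rintro ⟨hA, hs⟩
    exact hs ▸ h1 A hA
  · intro h
    exact ⟨(h2 i A h).1, (h2 i A h).2⟩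

end Stmt9Aux


namespace Stmt9Aux

section Main
variable {n : ℕ}

/-- set of variables of a maximal var-disjoint family `M` -/
def VV (M : Finset (Clause n)) : Finset (Fin n) := M.biUnion clVars

/-- branch data: a local satisfying assignment for each clause of `M` -/
def RR (M : Finset (Clause n)) := ∀ C : {C // C ∈ M}, {E : Clause n // IsLocalSat C.val E}

/-- the union of the chosen local assignments, as a set of literals -/
def Prho (M : Finset (Clause n)) (ρ : RR M) : Clause n := M.attach.biUnion fun C => (ρ C).val

/-- the set of literals over `VV M` falsified by `ρ` -/
def Fals (M : Finset (Clause n)) (ρ : RR M) : Clause n := (Prho M ρ).image (fun l => (l.1, !l.2))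

/-- a clause is active if all its `V`-literals are falsified by `ρ` -/
def activeCl (M : Finset (Clause n)) (ρ : RR M) (C : Clause n) : Prop :=
  ∀ l ∈ C, l.1 ∈ VV M → (l.1, !l.2) ∈ Prho M ρ

/-- the part of a clause outside the variables `VV M` -/
noncomputable def freeCl (M : Finset (Clause n)) (C : Clause n) : Clause n := C.filter fun m => m.1 ∉ VV M

/-- active clauses of `F` containing the literal `l` -/
noncomputable def Acl (F : Cnf n) (M : Finset (Clause n)) (ρ : RR M) (l : Lit n) : Cnf n :=
  F.filter fun C => l ∈ C ∧ activeCl M ρ C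

/-- second-stage branch data -/
def Tt (M : Finset (Clause n)) (SS : RR M → Lit n → Finset (Clause n)) (ρ : RR M) :=
  ∀ l : {l // l ∈ Fals M ρ}, ∀ D : {D // D ∈ SS ρ l.val},
    {E : Clause n // IsLocalSat (freeCl M D.val) E}

/-- the branch index type -/
def I0 (M : Finset (Clause n)) (SS : RR M → Lit n → Finset (Clause n)) := Σ ρ : RR M, Tt M SS ρ

/-- all unit literals fixed by a branch -/
def Pb (M : Finset (Clause n)) (SS : RR M → Lit n → Finset (Clause n)) (b : I0 M SS) : Clause n :=
  Prho M b.1 ∪ (Fals M b.1).attach.biUnion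
    fun l => (SS b.1 l.val).attach.biUnion fun D => (b.2 l D).val

/-- a trivially unsatisfiable 1-CNF -/
def botF (x₀ : Fin n) : Cnf n := {{(x₀, true)}, {(x₀, false)}}

/-- the 1-CNF of a branch -/
noncomputable def Gb (F : Cnf n) (M : Finset (Clause n)) (SS : RR M → Lit n → Finset (Clause n)) (x₀ : Fin n)
    (b : I0 M SS) : Cnf n :=
  (Pb M SS b).image (fun l => {l}) ∪ F.biUnion (fun C =>
    if ∃ l ∈ C, l ∈ Pb M SS b then ∅
    else if (C.filter fun l => l.1 ∉ clVars (Pb M SS b)).card = 1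
      then (C.filter fun l => l.1 ∉ clVars (Pb M SS b)).image (fun l => {l})
      else botF x₀)

lemma subset_Prho {M : Finset (Clause n)} (ρ : RR M) (C : {C // C ∈ M}) :
    (ρ C).val ⊆ Prho M ρ := fun l hl => mem_biUnion.2 ⟨C, mem_attach _ _, hl⟩

lemma clVars_Prho {M : Finset (Clause n)} (ρ : RR M) : clVars (Prho M ρ) = VV M := by
  ext x
  constructor
  · intro hx
    obtain ⟨l, hl, rfl⟩ := mem_clVars.1 hx
    obtain ⟨C, _, hlC⟩ := mem_biUnion.1 hl
    have : l.1 ∈ clVars C.val := (ρ C).2.1 ▸ mem_clVars.2 ⟨l, hlC, rfl⟩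
    exact mem_biUnion.2 ⟨C.val, C.2, this⟩
  · intro hx
    obtain ⟨C, hC, hxC⟩ := mem_biUnion.1 hx
    rw [← (ρ ⟨C, hC⟩).2.1] at hxC
    obtain ⟨l, hl, rfl⟩ := mem_clVars.1 hxC
    exact mem_clVars.2 ⟨l, subset_Prho ρ ⟨C, hC⟩ hl, rfl⟩

lemma distinct_Prho {M : Finset (Clause n)} (hMd : varDisjoint M) (ρ : RR M) :
    distinctVars (Prho M ρ) := by
  intro l hl l' hl' hfst
  obtain ⟨C, _, hlC⟩ := mem_biUnion.1 hl
  obtain ⟨C', _, hlC'⟩ := mem_biUnion.1 hl'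
  rcases eq_or_ne C C' with rfl | hne
  · exact (ρ C).2.2.1 l hlC l' hlC' hfst
  · exfalso
    have hvne : C.val ≠ C'.val := fun h => hne (Subtype.ext h)
    have hdisj := hMd C.val C.2 C'.val C'.2 hvne
    have h1 : l.1 ∈ clVars C.val := (ρ C).2.1 ▸ mem_clVars.2 ⟨l, hlC, rfl⟩
    have h2 : l.1 ∈ clVars C'.val := by
      rw [hfst]
      exact (ρ C').2.1 ▸ mem_clVars.2 ⟨l', hlC', rfl⟩
    exact (Finset.disjoint_left.1 hdisj h1) h2

lemma mem_Fals {M : Finset (Clause n)} {ρ : RR M} {l : Lit n} :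
    l ∈ Fals M ρ ↔ (l.1, !l.2) ∈ Prho M ρ := by
  simp only [Fals, mem_image]
  constructor
  · rintro ⟨p, hp, rfl⟩
    simpa using hp
  · intro h
    exact ⟨(l.1, !l.2), h, by simp⟩

lemma Fals_var {M : Finset (Clause n)} {ρ : RR M} {l : Lit n} (h : l ∈ Fals M ρ) :
    l.1 ∈ VV M := by
  have := mem_Fals.1 h
  have : l.1 ∈ clVars (Prho M ρ) := mem_clVars.2 ⟨_, this, rfl⟩
  rwa [clVars_Prho] at this

/-- the first-stage signature of a satisfying assignment -/
def rhoA (M : Finset (Clause n)) (A : Fin n → Bool) (hM : ∀ C ∈ M, clauseSat A C) : RR M :=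
  fun C => ⟨lits A (clVars C.val), clVars_lits, distinct_lits, by
    obtain ⟨l, hl, hAl⟩ := hM C.val C.2
    exact ⟨l, hl, mem_lits.2 ⟨mem_clVars.2 ⟨l, hl, rfl⟩, hAl⟩⟩⟩

lemma Prho_rhoA {M : Finset (Clause n)} {A : Fin n → Bool} (hM : ∀ C ∈ M, clauseSat A C) :
    Prho M (rhoA M A hM) = lits A (VV M) := by
  ext l
  constructor
  · intro h
    obtain ⟨C, _, hl⟩ := mem_biUnion.1 h
    have hl' : l ∈ lits A (clVars C.val) := hl
    rw [mem_lits] at hl'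
    exact mem_lits.2 ⟨mem_biUnion.2 ⟨C.val, C.2, hl'.1⟩, hl'.2⟩
  · intro h
    obtain ⟨hv, hA⟩ := mem_lits.1 h
    obtain ⟨C, hC, hx⟩ := mem_biUnion.1 hv
    exact mem_biUnion.2 ⟨⟨C, hC⟩, mem_attach _ _, mem_lits.2 ⟨hx, hA⟩⟩

/-- var-disjointness of remainders after removing literal `l` -/
def pdisj (l : Lit n) (T : Finset (Clause n)) : Prop :=
  ∀ C ∈ T, ∀ C' ∈ T, C ≠ C' → Disjoint (clVars (C \ {l})) (clVars (C' \ {l}))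

/-- second-stage signature of a satisfying assignment -/
noncomputable def tauA (F : Cnf n) (M : Finset (Clause n))
    (SS : RR M → Lit n → Finset (Clause n))
    (A : Fin n → Bool) (hM : ∀ C ∈ M, clauseSat A C)
    (hSS1 : ∀ ρ l, SS ρ l ⊆ Acl F M ρ l)
    (hF : cnfSat A F) : Tt M SS (rhoA M A hM) :=
  fun l D => ⟨lits A (clVars (freeCl M D.val)), clVars_lits, distinct_lits, by
    have hD := hSS1 _ l.val D.2
    rw [Acl, mem_filter] at hD
    obtain ⟨hDF, _, hact⟩ := hD
    obtain ⟨m, hm, hAm⟩ := hF D.val hDF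
    have hmV : m.1 ∉ VV M := by
      intro hmem
      have h2 := hact m hm hmem
      rw [Prho_rhoA hM] at h2
      have h3 := (mem_lits.1 h2).2
      rw [hAm] at h3
      simp at h3
    have hmfree : m ∈ freeCl M D.val := mem_filter.2 ⟨hm, hmV⟩
    exact ⟨m, hmfree, mem_lits.2 ⟨mem_clVars.2 ⟨m, hmfree, rfl⟩, hAm⟩⟩⟩

lemma Pb_sig_graph {F : Cnf n} {M : Finset (Clause n)}
    {SS : RR M → Lit n → Finset (Clause n)}
    {A : Fin n → Bool} (hM : ∀ C ∈ M, clauseSat A C)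
    (hSS1 : ∀ ρ l, SS ρ l ⊆ Acl F M ρ l) (hF : cnfSat A F) :
    ∀ l ∈ Pb M SS ⟨rhoA M A hM, tauA F M SS A hM hSS1 hF⟩, A l.1 = l.2 := by
  intro l hl
  rcases mem_union.1 hl with h | h
  · rw [Prho_rhoA hM] at h
    exact (mem_lits.1 h).2
  · obtain ⟨lf, _, h2⟩ := mem_biUnion.1 h
    obtain ⟨D, _, h3⟩ := mem_biUnion.1 h2
    have h4 : l ∈ lits A (clVars (freeCl M D.val)) := h3
    exact (mem_lits.1 h4).2

lemma V_subset_domPb {M : Finset (Clause n)} {SS : RR M → Lit n → Finset (Clause n)}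
    (b : I0 M SS) : VV M ⊆ clVars (Pb M SS b) := by
  intro x hx
  rw [← clVars_Prho b.1] at hx
  obtain ⟨l, hl, rfl⟩ := mem_clVars.1 hx
  exact mem_clVars.2 ⟨l, mem_union.2 (Or.inl hl), rfl⟩

lemma freeS_subset_dom {M : Finset (Clause n)} {SS : RR M → Lit n → Finset (Clause n)}
    (b : I0 M SS) (l : {l // l ∈ Fals M b.1}) (D : {D // D ∈ SS b.1 l.val}) :
    clVars (freeCl M D.val) ⊆ clVars (Pb M SS b) := by
  intro x hx
  rw [← (b.2 l D).2.1] at hx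
  obtain ⟨m, hm, rfl⟩ := mem_clVars.1 hx
  refine mem_clVars.2 ⟨m, mem_union.2 (Or.inr ?_), rfl⟩
  exact mem_biUnion.2 ⟨l, mem_attach _ _, mem_biUnion.2 ⟨D, mem_attach _ _, hm⟩⟩

lemma claim_card_le {F : Cnf n} {M : Finset (Clause n)}
    {SS : RR M → Lit n → Finset (Clause n)}
    {A : Fin n → Bool} (hM : ∀ C ∈ M, clauseSat A C) (hF : cnfSat A F)
    (hF3 : ∀ C ∈ F, C.card ≤ 3)
    (hVC : ∀ C ∈ F, ∃ l ∈ C, l.1 ∈ VV M)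
    (hSS1 : ∀ ρ l, SS ρ l ⊆ Acl F M ρ l)
    (hSS2 : ∀ ρ l, pdisj l (SS ρ l))
    (hSS3 : ∀ ρ l, ∀ C ∈ Acl F M ρ l, C ∉ SS ρ l → ¬ pdisj l (insert C (SS ρ l)))
    (C : Clause n) (hC : C ∈ F)
    (hunsat : ¬ ∃ l ∈ C, l ∈ Pb M SS ⟨rhoA M A hM, tauA F M SS A hM hSS1 hF⟩) :
    (C.filter fun l => l.1 ∉ clVars (Pb M SS ⟨rhoA M A hM, tauA F M SS A hM hSS1 hF⟩)).card ≤ 1 := by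
  set ρ := rhoA M A hM with hρ
  set b : I0 M SS := ⟨ρ, tauA F M SS A hM hSS1 hF⟩ with hb
  set dom := clVars (Pb M SS b) with hdom
  have hfalse : ∀ l ∈ C, l.1 ∈ VV M → (l.1, !l.2) ∈ Prho M ρ := by
    intro l hl hV
    have hne : A l.1 ≠ l.2 := by
      intro he
      refine hunsat ⟨l, hl, mem_union.2 (Or.inl ?_)⟩
      show l ∈ Prho M (rhoA M A hM)
      rw [Prho_rhoA hM]
      exact mem_lits.2 ⟨hV, he⟩
    have hAl : A l.1 = !l.2 := by
      cases hA : A l.1 <;> cases hl2 : l.2 <;> simp_all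
    show (l.1, !l.2) ∈ Prho M (rhoA M A hM)
    rw [Prho_rhoA hM]
    exact mem_lits.2 ⟨hV, hAl⟩
  have hact : activeCl M ρ C := fun l hl hV => hfalse l hl hV
  obtain ⟨l₀, hl₀C, hl₀V⟩ := hVC C hC
  have hl₀F : l₀ ∈ Fals M ρ := mem_Fals.2 (hfalse l₀ hl₀C hl₀V)
  have hCA : C ∈ Acl F M ρ l₀ := mem_filter.2 ⟨hC, hl₀C, hact⟩
  by_cases hCS : C ∈ SS ρ l₀
  · have hall : ∀ l ∈ C, l.1 ∈ dom := by
      intro l hl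
      by_cases hV : l.1 ∈ VV M
      · exact V_subset_domPb b hV
      · have hfr : l ∈ freeCl M C := mem_filter.2 ⟨hl, hV⟩
        exact freeS_subset_dom b ⟨l₀, hl₀F⟩ ⟨C, hCS⟩ (mem_clVars.2 ⟨l, hfr, rfl⟩)
    have hemp : (C.filter fun l => l.1 ∉ dom) = ∅ := by
      rw [filter_eq_empty_iff]
      intro l hl
      simp only [not_not]
      exact hall l hl
    rw [hemp, card_empty]
    omega
  · have hnp := hSS3 ρ l₀ C hCA hCS
    have hex : ∃ D ∈ SS ρ l₀, ∃ y, y ∈ clVars (C \ {l₀}) ∧ y ∈ clVars (D \ {l₀}) := by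
      unfold pdisj at hnp
      push_neg at hnp
      obtain ⟨C₁, hC₁, C₂, hC₂, hne12, hnd⟩ := hnp
      rcases mem_insert.1 hC₁ with rfl | h₁
      · rcases mem_insert.1 hC₂ with rfl | h₂
        · exact absurd rfl hne12
        · obtain ⟨y, hy1, hy2⟩ := not_disjoint_iff.1 hnd
          exact ⟨C₂, h₂, y, hy1, hy2⟩
      · rcases mem_insert.1 hC₂ with rfl | h₂
        · obtain ⟨y, hy1, hy2⟩ := not_disjoint_iff.1 hnd
          exact ⟨C₁, h₁, y, hy2, hy1⟩
        · exact absurd (hSS2 ρ l₀ C₁ h₁ C₂ h₂ hne12) hnd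
    obtain ⟨D, hDS, y, hy1, hy2⟩ := hex
    have hydom : y ∈ dom := by
      obtain ⟨d, hd, rfl⟩ := mem_clVars.1 hy2
      have hdD : d ∈ D := (mem_sdiff.1 hd).1
      by_cases hV : d.1 ∈ VV M
      · exact V_subset_domPb b hV
      · exact freeS_subset_dom b ⟨l₀, hl₀F⟩ ⟨D, hDS⟩
          (mem_clVars.2 ⟨d, mem_filter.2 ⟨hdD, hV⟩, rfl⟩)
    obtain ⟨c, hcC, hcy⟩ := mem_clVars.1 hy1
    have hcC' : c ∈ C := (mem_sdiff.1 hcC).1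
    have hcne : c ≠ l₀ := by
      have := (mem_sdiff.1 hcC).2
      simpa using this
    have hsub : (C.filter fun l => l.1 ∉ dom) ⊆ (C.erase l₀).erase c := by
      intro l hl
      obtain ⟨hlC, hldom⟩ := mem_filter.1 hl
      refine mem_erase.2 ⟨?_, mem_erase.2 ⟨?_, hlC⟩⟩
      · rintro rfl
        exact hldom (hcy ▸ hydom)
      · rintro rfl
        exact hldom (V_subset_domPb b hl₀V)
    calc (C.filter fun l => l.1 ∉ dom).card ≤ ((C.erase l₀).erase c).card := card_le_card hsub
      _ = C.card - 1 - 1 := by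
          rw [card_erase_of_mem (mem_erase.2 ⟨hcne, hcC'⟩), card_erase_of_mem hl₀C]
      _ ≤ 1 := by
          have := hF3 C hC
          omega

lemma h1_lemma {F : Cnf n} {M : Finset (Clause n)}
    {SS : RR M → Lit n → Finset (Clause n)} (x₀ : Fin n)
    {A : Fin n → Bool} (hM : ∀ C ∈ M, clauseSat A C) (hA : cnfSat A F)
    (hF3 : ∀ C ∈ F, C.card ≤ 3)
    (hVC : ∀ C ∈ F, ∃ l ∈ C, l.1 ∈ VV M)
    (hSS1 : ∀ ρ l, SS ρ l ⊆ Acl F M ρ l)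
    (hSS2 : ∀ ρ l, pdisj l (SS ρ l))
    (hSS3 : ∀ ρ l, ∀ C ∈ Acl F M ρ l, C ∉ SS ρ l → ¬ pdisj l (insert C (SS ρ l))) :
    cnfSat A (Gb F M SS x₀ ⟨rhoA M A hM, tauA F M SS A hM hSS1 hA⟩) := by
  set b : I0 M SS := ⟨rhoA M A hM, tauA F M SS A hM hSS1 hA⟩ with hb
  intro Cl hCl
  rcases mem_union.1 hCl with h | h
  · obtain ⟨l, hlP, rfl⟩ := mem_image.1 h
    exact ⟨l, mem_singleton_self l, Pb_sig_graph hM hSS1 hA l hlP⟩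
  · obtain ⟨C, hCF, hmem⟩ := mem_biUnion.1 h
    by_cases hsat : ∃ l ∈ C, l ∈ Pb M SS b
    · rw [if_pos hsat] at hmem
      exact absurd hmem (notMem_empty _)
    · rw [if_neg hsat] at hmem
      have hclaim := claim_card_le hM hA hF3 hVC hSS1 hSS2 hSS3 C hCF hsat
      rw [← hb] at hclaim
      obtain ⟨m, hmC, hAm⟩ := hA C hCF
      have hmdom : m.1 ∉ clVars (Pb M SS b) := by
        intro hdm
        obtain ⟨p, hp, hpfst⟩ := mem_clVars.1 hdm
        have hpA := Pb_sig_graph hM hSS1 hA p hp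
        refine hsat ⟨m, hmC, ?_⟩
        have hpm : p = m := Prod.ext hpfst (by rw [← hpA, hpfst, hAm])
        rwa [hpm] at hp
      have hmfil : m ∈ C.filter (fun l => l.1 ∉ clVars (Pb M SS b)) :=
        mem_filter.2 ⟨hmC, hmdom⟩
      have hcard1 : (C.filter fun l => l.1 ∉ clVars (Pb M SS b)).card = 1 := by
        have h1 := Finset.card_pos.2 ⟨m, hmfil⟩
        omega
      rw [if_pos hcard1] at hmem
      obtain ⟨l, hlfil, rfl⟩ := mem_image.1 hmem
      have hlm : l = m := by
        obtain ⟨a, ha⟩ := card_eq_one.1 hcard1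
        rw [ha, mem_singleton] at hlfil hmfil
        rw [hlfil, hmfil]
      refine ⟨l, mem_singleton_self l, ?_⟩
      rw [hlm]
      exact hAm

lemma h2_lemma {F : Cnf n} {M : Finset (Clause n)}
    {SS : RR M → Lit n → Finset (Clause n)} (x₀ : Fin n)
    (b : I0 M SS) (A : Fin n → Bool)
    (hSS1 : ∀ ρ l, SS ρ l ⊆ Acl F M ρ l)
    (hGA : cnfSat A (Gb F M SS x₀ b)) :
    cnfSat A F ∧ ∀ (hA : cnfSat A F) (hM : ∀ C ∈ M, clauseSat A C),
      (⟨rhoA M A hM, tauA F M SS A hM hSS1 hA⟩ : I0 M SS) = b := by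
  obtain ⟨ρ, τ⟩ := b
  have hPbA : ∀ l ∈ Pb M SS ⟨ρ, τ⟩, A l.1 = l.2 := by
    intro l hl
    have hmem : ({l} : Clause n) ∈ Gb F M SS x₀ ⟨ρ, τ⟩ :=
      mem_union.2 (Or.inl (mem_image_of_mem _ hl))
    obtain ⟨l', hl', hAl'⟩ := hGA _ hmem
    rw [mem_singleton] at hl'
    rwa [hl'] at hAl'
  have hbot : ¬ (∀ Cl ∈ botF (n := n) x₀, clauseSat A Cl) := by
    intro hB
    obtain ⟨l1, hl1, hA1⟩ := hB {(x₀, true)} (mem_insert_self _ _)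
    obtain ⟨l2, hl2, hA2⟩ := hB {(x₀, false)} (mem_insert_of_mem (mem_singleton_self _))
    rw [mem_singleton] at hl1 hl2
    rw [hl1] at hA1
    rw [hl2] at hA2
    rw [hA1] at hA2
    simp at hA2
  have hAF : cnfSat A F := by
    intro C hCF
    by_cases hsat : ∃ l ∈ C, l ∈ Pb M SS ⟨ρ, τ⟩
    · obtain ⟨l, hlC, hlP⟩ := hsat
      exact ⟨l, hlC, hPbA l hlP⟩
    · by_cases hcard : (C.filter fun l => l.1 ∉ clVars (Pb M SS ⟨ρ, τ⟩)).card = 1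
      · have hmem : (C.filter fun l => l.1 ∉ clVars (Pb M SS ⟨ρ, τ⟩)).image (fun l => {l})
            ⊆ Gb F M SS x₀ ⟨ρ, τ⟩ := by
          intro Cl hCl
          refine mem_union.2 (Or.inr (mem_biUnion.2 ⟨C, hCF, ?_⟩))
          rw [if_neg hsat, if_pos hcard]
          exact hCl
        obtain ⟨a, ha⟩ := card_eq_one.1 hcard
        have haC : a ∈ C := (mem_filter.1 (ha ▸ mem_singleton_self a)).1
        obtain ⟨l', hl', hAl'⟩ := hGA _ (hmem (mem_image_of_mem _ (ha ▸ mem_singleton_self a)))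
        rw [mem_singleton] at hl'
        rw [hl'] at hAl'
        exact ⟨a, haC, hAl'⟩
      · exfalso
        apply hbot
        intro Cl hCl
        refine hGA Cl (mem_union.2 (Or.inr (mem_biUnion.2 ⟨C, hCF, ?_⟩)))
        rw [if_neg hsat, if_neg hcard]
        exact hCl
  refine ⟨hAF, fun hA hM => ?_⟩
  have hρeq : rhoA M A hM = ρ := by
    funext C
    refine Subtype.ext ?_
    have hgr : ∀ l ∈ (ρ C).val, A l.1 = l.2 := fun l hl =>
      hPbA l (mem_union.2 (Or.inl (subset_Prho ρ C hl)))
    exact (eq_lits (ρ C).2.1 hgr).symm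
  subst hρeq
  have hτeq : tauA F M SS A hM hSS1 hA = τ := by
    funext l D
    refine Subtype.ext ?_
    have hgr : ∀ m ∈ (τ l D).val, A m.1 = m.2 := by
      intro m hm
      refine hPbA m (mem_union.2 (Or.inr ?_))
      exact mem_biUnion.2 ⟨l, mem_attach _ _, mem_biUnion.2 ⟨D, mem_attach _ _, hm⟩⟩
    exact (eq_lits (τ l D).2.1 hgr).symm
  rw [hτeq]

noncomputable instance instFintypeRR (M : Finset (Clause n)) : Fintype (RR M) := by
  unfold RR; infer_instance

noncomputable instance instFintypeTt (M : Finset (Clause n))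
    (SS : RR M → Lit n → Finset (Clause n)) (ρ : RR M) : Fintype (Tt M SS ρ) := by
  unfold Tt; infer_instance

noncomputable instance instFintypeI0 (M : Finset (Clause n))
    (SS : RR M → Lit n → Finset (Clause n)) : Fintype (I0 M SS) := by
  unfold I0; infer_instance

lemma card_RR_le {F : Cnf n} {M : Finset (Clause n)} (hMF : M ⊆ F)
    (hF3 : ∀ C ∈ F, C.card ≤ 3) : Nat.card (RR M) ≤ 7 ^ M.card := by
  have h : Nat.card (RR M) = ∏ C : {C // C ∈ M}, Nat.card {E : Clause n // IsLocalSat C.val E} :=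
    Nat.card_pi
  rw [h]
  calc ∏ C : {C // C ∈ M}, Nat.card {E : Clause n // IsLocalSat C.val E}
      ≤ ∏ _C : {C // C ∈ M}, 7 := by
        refine Finset.prod_le_prod' ?_
        intro C _
        have := card_isLocalSat_le C.val 3 (hF3 C.val (hMF C.2))
        norm_num at this
        rw [Nat.card_eq_fintype_card]
        exact this
    _ = 7 ^ M.card := by rw [prod_const, card_univ, Fintype.card_coe]

lemma card_Fals_le {F : Cnf n} {M : Finset (Clause n)} (hMF : M ⊆ F)
    (hF3 : ∀ C ∈ F, C.card ≤ 3) (ρ : RR M) : (Fals M ρ).card ≤ 3 * M.card := by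
  calc (Fals M ρ).card ≤ (Prho M ρ).card := card_image_le
    _ ≤ ∑ C ∈ M.attach, ((ρ C).val).card := card_biUnion_le
    _ ≤ ∑ _C ∈ M.attach, 3 := by
        refine sum_le_sum ?_
        intro C _
        rw [card_eq_card_clVars (ρ C).2.2.1, (ρ C).2.1]
        exact le_trans card_image_le (hF3 C.val (hMF C.2))
    _ = 3 * M.card := by rw [sum_const, card_attach, smul_eq_mul, mul_comm]

lemma card_freeCl_le {F : Cnf n} {M : Finset (Clause n)}
    {SS : RR M → Lit n → Finset (Clause n)} (hF3 : ∀ C ∈ F, C.card ≤ 3)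
    (hSS1 : ∀ ρ l, SS ρ l ⊆ Acl F M ρ l) {ρ : RR M} {l : Lit n} (hl : l ∈ Fals M ρ)
    {D : Clause n} (hD : D ∈ SS ρ l) : (freeCl M D).card ≤ 2 := by
  have hDA := mem_filter.1 (hSS1 ρ l hD)
  have hlD : l ∈ D := hDA.2.1
  have hlV : l.1 ∈ VV M := Fals_var hl
  have hsub : freeCl M D ⊆ D.erase l := by
    intro m hm
    obtain ⟨hmD, hmV⟩ := mem_filter.1 hm
    exact mem_erase.2 ⟨fun h => hmV (h ▸ hlV), hmD⟩
  calc (freeCl M D).card ≤ (D.erase l).card := card_le_card hsub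
    _ = D.card - 1 := card_erase_of_mem hlD
    _ ≤ 2 := by have := hF3 D hDA.1; omega

lemma card_Tt_le {F : Cnf n} {M : Finset (Clause n)}
    {SS : RR M → Lit n → Finset (Clause n)} (hMF : M ⊆ F)
    (hF3 : ∀ C ∈ F, C.card ≤ 3)
    (hSS1 : ∀ ρ l, SS ρ l ⊆ Acl F M ρ l) {Q : ℕ}
    (hSSQ : ∀ ρ l, (SS ρ l).card ≤ Q - 1) (ρ : RR M) :
    Nat.card (Tt M SS ρ) ≤ 3 ^ ((Q - 1) * (3 * M.card)) := by
  have h : Nat.card (Tt M SS ρ) =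
      ∏ l : {l // l ∈ Fals M ρ}, Nat.card (∀ D : {D // D ∈ SS ρ l.val},
        {E : Clause n // IsLocalSat (freeCl M D.val) E}) := Nat.card_pi
  rw [h]
  have hstep : ∀ l : {l // l ∈ Fals M ρ},
      Nat.card (∀ D : {D // D ∈ SS ρ l.val}, {E : Clause n // IsLocalSat (freeCl M D.val) E})
        ≤ 3 ^ (Q - 1) := by
    intro l
    rw [Nat.card_pi]
    calc ∏ D : {D // D ∈ SS ρ l.val}, Nat.card {E : Clause n // IsLocalSat (freeCl M D.val) E}
        ≤ ∏ _D : {D // D ∈ SS ρ l.val}, 3 := by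
          refine Finset.prod_le_prod' ?_
          intro D _
          have h2 := card_isLocalSat_le (freeCl M D.val) 2
            (card_freeCl_le hF3 hSS1 l.2 D.2)
          norm_num at h2
          rw [Nat.card_eq_fintype_card]
          exact h2
      _ = 3 ^ (SS ρ l.val).card := by rw [prod_const, card_univ, Fintype.card_coe]
      _ ≤ 3 ^ (Q - 1) := Nat.pow_le_pow_right (by norm_num) (hSSQ ρ l.val)
  calc ∏ l : {l // l ∈ Fals M ρ}, Nat.card (∀ D : {D // D ∈ SS ρ l.val},
        {E : Clause n // IsLocalSat (freeCl M D.val) E})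
      ≤ ∏ _l : {l // l ∈ Fals M ρ}, 3 ^ (Q - 1) := Finset.prod_le_prod' (fun l _ => hstep l)
    _ = (3 ^ (Q - 1)) ^ (Fals M ρ).card := by rw [prod_const, card_univ, Fintype.card_coe]
    _ = 3 ^ ((Q - 1) * (Fals M ρ).card) := by rw [← pow_mul]
    _ ≤ 3 ^ ((Q - 1) * (3 * M.card)) :=
        Nat.pow_le_pow_right (by norm_num)
          (Nat.mul_le_mul_left _ (card_Fals_le hMF hF3 ρ))

lemma card_I0_le {F : Cnf n} {M : Finset (Clause n)}
    {SS : RR M → Lit n → Finset (Clause n)} (hMF : M ⊆ F)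
    (hF3 : ∀ C ∈ F, C.card ≤ 3)
    (hSS1 : ∀ ρ l, SS ρ l ⊆ Acl F M ρ l) {Q : ℕ}
    (hSSQ : ∀ ρ l, (SS ρ l).card ≤ Q - 1) :
    Nat.card (I0 M SS) ≤ 7 ^ M.card * 3 ^ ((Q - 1) * (3 * M.card)) := by
  have h : Nat.card (I0 M SS) = ∑ ρ : RR M, Nat.card (Tt M SS ρ) := by
    have h1 : Nat.card (I0 M SS) = Nat.card (Σ ρ : RR M, Tt M SS ρ) := rfl
    rw [h1, Nat.card_eq_fintype_card, Fintype.card_sigma]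
    exact Finset.sum_congr rfl (fun ρ _ => (Nat.card_eq_fintype_card).symm)
  rw [h]
  calc ∑ ρ : RR M, Nat.card (Tt M SS ρ)
      ≤ ∑ _ρ : RR M, 3 ^ ((Q - 1) * (3 * M.card)) :=
        sum_le_sum (fun ρ _ => card_Tt_le hMF hF3 hSS1 hSSQ ρ)
    _ = Fintype.card (RR M) * 3 ^ ((Q - 1) * (3 * M.card)) := by
        rw [sum_const, card_univ, smul_eq_mul]
    _ ≤ 7 ^ M.card * 3 ^ ((Q - 1) * (3 * M.card)) := by
        refine Nat.mul_le_mul_right _ ?_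
        rw [← Nat.card_eq_fintype_card]
        exact card_RR_le hMF hF3

lemma width_GG {F : Cnf n} {M : Finset (Clause n)}
    {SS : RR M → Lit n → Finset (Clause n)} (x₀ : Fin n)
    (i : Option (I0 M SS)) : ∀ C ∈ i.elim (botF x₀) (Gb F M SS x₀), C.card = 1 := by
  have hbot : ∀ C ∈ botF (n := n) x₀, C.card = 1 := by
    intro C hC
    rcases mem_insert.1 hC with rfl | hC
    · exact card_singleton _
    · rw [mem_singleton] at hC
      rw [hC]
      exact card_singleton _
  cases i with
  | none => exact hbot
  | some b =>
    intro C hC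
    rcases mem_union.1 hC with h | h
    · obtain ⟨l, _, rfl⟩ := mem_image.1 h
      exact card_singleton _
    · obtain ⟨C₀, _, hmem⟩ := mem_biUnion.1 h
      split_ifs at hmem with h1 h2
      · exact absurd hmem (notMem_empty _)
      · obtain ⟨l, _, rfl⟩ := mem_image.1 hmem
        exact card_singleton _
      · exact hbot C hmem

lemma main_lemma (F : Cnf n) (Z Q : ℕ) (hZ : 0 < Z) (hQ : 0 < Q) (x₀ : Fin n)
    (hF3 : ∀ C ∈ F, C.card ≤ 3)
    (hne : ∅ ∉ F)
    (hno0 : ∀ S ⊆ F, varDisjoint S → S.card < Z)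
    (hno1 : ∀ (l : Lit n) (S : Finset (Clause n)), S ⊆ F → (∀ C ∈ S, l ∈ C) →
      pdisj l S → S.card < Q) :
    ∃ (m : ℕ) (G : Fin m → Cnf n), m ≤ 7 ^ Z * 3 ^ (3 * Z * Q) ∧
      (∀ i, ∀ C ∈ G i, C.card = 1) ∧ numSat F = ∑ i, numSat (G i) := by
  -- maximal var-disjoint family
  obtain ⟨M, hMF, hMd, hMmax⟩ := exists_maximal_subset F varDisjoint
    (fun C hC => absurd hC (notMem_empty _))
  have hMcard : M.card < Z := hno0 M hMF hMd
  -- every clause of F has a variable in VV M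
  have hVC : ∀ C ∈ F, ∃ l ∈ C, l.1 ∈ VV M := by
    intro C hC
    by_contra hcon
    push_neg at hcon
    have hCne : C ≠ ∅ := fun hc => hne (hc ▸ hC)
    by_cases hCM : C ∈ M
    · obtain ⟨l, hl⟩ := nonempty_iff_ne_empty.2 hCne
      exact hcon l hl (mem_biUnion.2 ⟨C, hCM, mem_clVars.2 ⟨l, hl, rfl⟩⟩)
    · refine hMmax C hC hCM ?_
      intro C₁ hC₁ C₂ hC₂ h12
      have hkey : ∀ C₂ ∈ M, Disjoint (clVars C) (clVars C₂) := by
        intro D hD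
        refine Finset.disjoint_left.2 fun x hx hx2 => ?_
        obtain ⟨l, hl, rfl⟩ := mem_clVars.1 hx
        exact hcon l hl (mem_biUnion.2 ⟨D, hD, hx2⟩)
      rcases mem_insert.1 hC₁ with rfl | h₁
      · rcases mem_insert.1 hC₂ with rfl | h₂
        · exact absurd rfl h12
        · exact hkey C₂ h₂
      · rcases mem_insert.1 hC₂ with rfl | h₂
        · exact (hkey C₁ h₁).symm
        · exact hMd C₁ h₁ C₂ h₂ h12
  -- maximal var-disjoint-remainder families
  have hex : ∀ (ρ : RR M) (l : Lit n), ∃ T, T ⊆ Acl F M ρ l ∧ pdisj l T ∧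
      ∀ C ∈ Acl F M ρ l, C ∉ T → ¬ pdisj l (insert C T) :=
    fun ρ l => exists_maximal_subset _ _ (fun C hC => absurd hC (notMem_empty _))
  choose SS hSS1 hSS2 hSS3 using hex
  have hSSQ : ∀ (ρ : RR M) (l : Lit n), (SS ρ l).card ≤ Q - 1 := by
    intro ρ l
    have := hno1 l (SS ρ l) (subset_trans (hSS1 ρ l) (filter_subset _ _))
      (fun C hC => (mem_filter.1 (hSS1 ρ l hC)).2.1) (hSS2 ρ l)
    omega
  -- the list of 1-CNFs
  set GG : Option (I0 M SS) → Cnf n := fun i => i.elim (botF x₀) (Gb F M SS x₀) with hGG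
  set sig : (Fin n → Bool) → Option (I0 M SS) := fun A =>
    if h : cnfSat A F then
      some ⟨rhoA M A (fun C hC => h C (hMF hC)),
        tauA F M SS A (fun C hC => h C (hMF hC)) hSS1 h⟩
    else none with hsig
  have hsum : numSat F = ∑ i : Option (I0 M SS), numSat (GG i) := by
    refine numSat_eq_sum GG sig ?_ ?_
    · intro A hA
      have : sig A = some ⟨rhoA M A (fun C hC => hA C (hMF hC)),
          tauA F M SS A (fun C hC => hA C (hMF hC)) hSS1 hA⟩ := by
        rw [hsig]
        exact dif_pos hA
      rw [this]
      exact h1_lemma x₀ (fun C hC => hA C (hMF hC)) hA hF3 hVC hSS1 hSS2 hSS3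
    · intro i A hGA
      cases i with
      | none =>
        exfalso
        obtain ⟨l1, hl1, hA1⟩ := hGA {(x₀, true)} (mem_insert_self _ _)
        obtain ⟨l2, hl2, hA2⟩ := hGA {(x₀, false)} (mem_insert_of_mem (mem_singleton_self _))
        rw [mem_singleton] at hl1 hl2
        rw [hl1] at hA1
        rw [hl2] at hA2
        rw [hA1] at hA2
        simp at hA2
      | some b =>
        obtain ⟨hAF, heq⟩ := h2_lemma x₀ b A hSS1 hGA
        refine ⟨hAF, ?_⟩
        rw [hsig]
        simp only [dif_pos hAF]
        exact congrArg some (heq hAF (fun C hC => hAF C (hMF hC)))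
  -- counting
  have hcount : Nat.card (Option (I0 M SS)) ≤ 7 ^ Z * 3 ^ (3 * Z * Q) := by
    have h1 : Nat.card (Option (I0 M SS)) = Nat.card (I0 M SS) + 1 := by
      rw [Nat.card_eq_fintype_card, Nat.card_eq_fintype_card, Fintype.card_option]
    have h2 := card_I0_le hMF hF3 hSS1 hSSQ
    have h3 : (7 : ℕ) ^ M.card * 3 ^ ((Q - 1) * (3 * M.card)) ≤
        7 ^ (Z - 1) * 3 ^ (3 * Z * Q) := by
      refine Nat.mul_le_mul ?_ ?_
      · exact Nat.pow_le_pow_right (by norm_num) (by omega)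
      · refine Nat.pow_le_pow_right (by norm_num) ?_
        have hM1 : M.card ≤ Z - 1 := by omega
        calc (Q - 1) * (3 * M.card) ≤ Q * (3 * Z) := by
              refine Nat.mul_le_mul (by omega) ?_
              refine Nat.mul_le_mul_left _ (by omega)
          _ = 3 * Z * Q := by ring
    have h4 : (0 : ℕ) < 7 ^ (Z - 1) * 3 ^ (3 * Z * Q) := by positivity
    have h5 : (7 : ℕ) ^ (Z - 1) * 3 ^ (3 * Z * Q) * 7 = 7 ^ Z * 3 ^ (3 * Z * Q) := by
      have : (7 : ℕ) ^ (Z - 1) * 7 = 7 ^ Z := by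
        rw [← pow_succ]
        congr 1
        omega
      calc (7 : ℕ) ^ (Z - 1) * 3 ^ (3 * Z * Q) * 7
          = 7 ^ (Z - 1) * 7 * 3 ^ (3 * Z * Q) := by ring
        _ = 7 ^ Z * 3 ^ (3 * Z * Q) := by rw [this]
    omega
  -- assemble
  refine ⟨Fintype.card (Option (I0 M SS)),
    fun i => GG ((Fintype.equivFin (Option (I0 M SS))).symm i), ?_, ?_, ?_⟩
  · rw [← Nat.card_eq_fintype_card]
    exact hcount
  · intro i
    exact width_GG x₀ _
  · rw [hsum]
    exact (Equiv.sum_comp (Fintype.equivFin (Option (I0 M SS))).symm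
      (fun i => numSat (GG i))).symm

end Main
end Stmt9Aux

/-- Sunflower extraction for 3-CNFs: every 3-CNF on `n` variables either contains a
0-sunflower of size `Z`, or a 1-sunflower of size `Q`, or its satisfying assignments are
counted exactly by a list of at most `7^Z · 3^{3ZQ}` 1-CNFs. -/
theorem stmt9 (Z Q n : ℕ) (hZ : 0 < Z) (hQ : 0 < Q)
    (F : Cnf n) (h3 : ∀ C ∈ F, C.card ≤ 3) :
    (∃ S ⊆ F, S.card = Z ∧ isSunflower S 0) ∨
    (∃ S ⊆ F, S.card = Q ∧ isSunflower S 1) ∨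
    (∃ (m : ℕ) (G : Fin m → Cnf n), m ≤ 7^Z * 3^(3 * Z * Q) ∧
      (∀ i : Fin m, ∀ C ∈ G i, C.card = 1) ∧
      numSat F = ∑ i : Fin m, numSat (G i)) := by
  by_cases h0 : ∃ S ⊆ F, S.card = Z ∧ isSunflower S 0
  · exact Or.inl h0
  by_cases h1s : ∃ S ⊆ F, S.card = Q ∧ isSunflower S 1
  · exact Or.inr (Or.inl h1s)
  refine Or.inr (Or.inr ?_)
  by_cases hFe : F = ∅
  · refine ⟨1, fun _ => (∅ : Cnf n), ?_, by simp, ?_⟩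
    · have : 0 < 7 ^ Z * 3 ^ (3 * Z * Q) := by positivity
      omega
    · subst hFe
      simp
  by_cases hEm : ∅ ∈ F
  · refine ⟨0, fun i => i.elim0, Nat.zero_le _, fun i => i.elim0, ?_⟩
    have hempty : IsEmpty {A : Fin n → Bool // cnfSat A F} := by
      refine ⟨fun p => ?_⟩
      obtain ⟨l, hl, _⟩ := p.2 ∅ hEm
      exact absurd hl (Finset.notMem_empty _)
    have : numSat F = 0 := Nat.card_of_isEmpty
    rw [this]
    simp
  · have hFne : F.Nonempty := Finset.nonempty_iff_ne_empty.2 hFe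
    obtain ⟨C₀, hC₀⟩ := hFne
    have hC₀ne : C₀ ≠ ∅ := fun h => hEm (h ▸ hC₀)
    obtain ⟨l₀, _⟩ := Finset.nonempty_iff_ne_empty.2 hC₀ne
    have hno0 : ∀ S ⊆ F, varDisjoint S → S.card < Z := by
      intro S hSF hSd
      by_contra hge
      push_neg at hge
      obtain ⟨T, hTS, hTcard⟩ := Finset.exists_subset_card_eq hge
      refine h0 ⟨T, subset_trans hTS hSF, hTcard, ∅, Finset.card_empty, 
        fun C _ => Finset.empty_subset _, ?_⟩
      intro C hC C' hC' hne'
      simpa [Finset.sdiff_empty] using hSd C (hTS hC) C' (hTS hC') hne'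
    have hno1 : ∀ (l : Lit n) (S : Finset (Clause n)), S ⊆ F → (∀ C ∈ S, l ∈ C) →
        Stmt9Aux.pdisj l S → S.card < Q := by
      intro l S hSF hlS hdisj
      by_contra hge
      push_neg at hge
      obtain ⟨T, hTS, hTcard⟩ := Finset.exists_subset_card_eq hge
      refine h1s ⟨T, subset_trans hTS hSF, hTcard, {l}, Finset.card_singleton _, ?_, ?_⟩
      · intro C hC
        exact Finset.singleton_subset_iff.2 (hlS C (hTS hC))
      · intro C hC C' hC' hne'
        exact hdisj C (hTS hC) C' (hTS hC') hne'
    obtain ⟨m, G, hm, hw, hsum⟩ := Stmt9Aux.main_lemma F Z Q hZ hQ l₀.1 h3 hEm hno0 hno1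
    exact ⟨m, G, hm, fun i C hC => hw i C hC, hsum⟩
end

section
/- Let φ be a 3-CNF formula on n variables, let r ≥ 1 and q ≥ 1 be integers, and let ℓ_1, …, ℓ_r be literals of pairwise distinct variables. Define F_0 = φ and, for 1 ≤ i ≤ r, let F_i be obtained from F_{i−1} by deleting every clause containing ℓ_i and removing every occurrence of ¬ℓ_i from the remaining clauses. Suppose that for each 1 ≤ i ≤ r, the formula F_{i−1} contains a 1-sunflower of size at least q with core {ℓ_i}, none of whose clauses contains the variable of ℓ_i except in the core literal ℓ_i itself. Then the number of assignments that satisfy φ and set at least one of ℓ_1, …, ℓ_r false is at most r · (3/4)^q · 2^n. -/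
open Finset
open scoped Classical


/-- `setTrue F l` asserts the literal `l` in `F`: delete every clause containing `l` and
remove every occurrence of `¬l` from the remaining clauses. -/
def setTrue {n : ℕ} (F : Cnf n) (l : Lit n) : Cnf n :=
  (F.filter (fun C => l ∉ C)).image (fun C => C.erase (l.1, !l.2))

section Helpers
variable {n : ℕ}

lemma distinctVars_subset {C C' : Clause n} (h : C' ⊆ C) (hd : distinctVars C) :
    distinctVars C' := fun l hl l' hl' => hd l (h hl) l' (h hl')

lemma setTrue_mem {F : Cnf n} {l : Lit n} {C' : Clause n} (h : C' ∈ setTrue F l) :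
    ∃ C ∈ F, l ∉ C ∧ C' = C.erase (l.1, !l.2) := by
  simp only [setTrue, Finset.mem_image, Finset.mem_filter] at h
  obtain ⟨C, ⟨hC, hl⟩, rfl⟩ := h
  exact ⟨C, hC, hl, rfl⟩

lemma cnfSat_setTrue {F : Cnf n} {l : Lit n} {A : Fin n → Bool}
    (hA : cnfSat A F) (hl : A l.1 = l.2) : cnfSat A (setTrue F l) := by
  intro C' hC'
  obtain ⟨C, hC, -, rfl⟩ := setTrue_mem hC'
  obtain ⟨m, hm, hms⟩ := hA C hC
  refine ⟨m, Finset.mem_erase.mpr ⟨?_, hm⟩, hms⟩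
  rintro rfl
  rw [hl] at hms
  simp at hms

lemma stepLemma (C : Clause n) (h2 : C.card ≤ 2) (hdv : distinctVars C)
    (p : (Fin n → Bool) → Prop)
    (hp : ∀ A B : Fin n → Bool, (∀ x, x ∉ clVars C → A x = B x) → p A → p B)
    (s t : Finset (Fin n → Bool))
    (hs : ∀ A, A ∈ s ↔ p A ∧ clauseSat A C)
    (ht : ∀ A, A ∈ t ↔ p A) :
    4 * s.card ≤ 3 * t.card := by
  have hseq : s = t.filter (fun A => clauseSat A C) := by
    ext A
    rw [hs, Finset.mem_filter, ht]
  have hpart : s.card + (t.filter (fun A => ¬ clauseSat A C)).card = t.card := by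
    rw [hseq]
    exact Finset.card_filter_add_card_filter_not _
  set u := t.filter (fun A => ¬ clauseSat A C) with hu
  have hmemu : ∀ A, A ∈ u ↔ p A ∧ ¬ clauseSat A C := by
    intro A
    rw [hu, Finset.mem_filter, ht]
  rcases (by omega : C.card = 0 ∨ C.card = 1 ∨ C.card = 2) with h | h | h
  · obtain rfl := Finset.card_eq_zero.mp h
    have hse : s = ∅ := by
      apply Finset.eq_empty_of_forall_notMem
      intro A hA
      obtain ⟨-, x, hx, -⟩ := (hs A).mp hA
      exact absurd hx (Finset.notMem_empty x)
    rw [hse]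
    simp
  · obtain ⟨l, rfl⟩ := Finset.card_eq_one.mp h
    have hcv : clVars ({l} : Clause n) = {l.1} := by simp [clVars]
    have hcs : ∀ B : Fin n → Bool, clauseSat B ({l} : Clause n) ↔ B l.1 = l.2 := by
      intro B; simp [clauseSat]
    have key : s.card ≤ u.card := by
      apply Finset.card_le_card_of_injOn (fun A => Function.update A l.1 (!l.2))
      · intro A hA
        obtain ⟨hpA, hsA⟩ := (hs A).mp hA
        rw [hcs] at hsA
        simp only [Finset.mem_coe]
        rw [hmemu, hcs]
        refine ⟨hp A _ (fun x hx => ?_) hpA, by simp⟩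
        rw [hcv, Finset.mem_singleton] at hx
        rw [Function.update_of_ne hx]
      · intro A hA A' hA' heq
        rw [Finset.mem_coe, hs, hcs] at hA hA'
        funext x
        by_cases hx : x = l.1
        · subst hx; rw [hA.2, hA'.2]
        · have := congrFun heq x
          simpa [Function.update_of_ne hx] using this
    omega
  · obtain ⟨l, m, hlm, rfl⟩ := Finset.card_eq_two.mp h
    have hvar : l.1 ≠ m.1 := fun hv => hlm (hdv l (by simp) m (by simp) hv)
    have hcv : clVars ({l, m} : Clause n) = {l.1, m.1} := by simp [clVars]
    have hcs : ∀ B : Fin n → Bool, clauseSat B ({l, m} : Clause n) ↔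
        (B l.1 = l.2 ∨ B m.1 = m.2) := by
      intro B; constructor
      · rintro ⟨x, hx, hxs⟩
        rcases Finset.mem_insert.mp hx with rfl | hx
        · exact Or.inl hxs
        · rw [Finset.mem_singleton] at hx; subst hx; exact Or.inr hxs
      · rintro (h | h)
        · exact ⟨l, by simp, h⟩
        · exact ⟨m, by simp, h⟩
    set F : (Fin n → Bool) → (Fin n → Bool) :=
      fun A => Function.update (Function.update A l.1 (!l.2)) m.1 (!m.2) with hF
    have hFl : ∀ A, F A l.1 = !l.2 := by
      intro A; rw [hF]; simp [Function.update_of_ne hvar]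
    have hFm : ∀ A, F A m.1 = !m.2 := by intro A; rw [hF]; simp
    have hFo : ∀ A x, x ≠ l.1 → x ≠ m.1 → F A x = A x := by
      intro A x hxl hxm; rw [hF]; simp [Function.update_of_ne hxm, Function.update_of_ne hxl]
    have key : s.card ≤ 3 * u.card := by
      apply Finset.card_le_mul_card_image_of_maps_to (f := F)
      · intro A hA
        obtain ⟨hpA, hsA⟩ := (hs A).mp hA
        rw [hmemu, hcs]
        refine ⟨hp A (F A) (fun x hx => ?_) hpA, ?_⟩
        · rw [hcv] at hx
          simp only [Finset.mem_insert, Finset.mem_singleton, not_or] at hx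
          exact (hFo A x hx.1 hx.2).symm
        · push_neg
          exact ⟨by simp [hFl], by simp [hFm]⟩
      · intro B hB
        calc (s.filter (fun A => F A = B)).card
            ≤ ((univ : Finset (Bool × Bool)).erase (!l.2, !m.2)).card := by
              apply Finset.card_le_card_of_injOn (fun A => (A l.1, A m.1))
              · intro A hA
                rw [Finset.mem_coe, Finset.mem_filter] at hA
                obtain ⟨hAs, -⟩ := hA
                obtain ⟨-, hsA⟩ := (hs A).mp hAs
                rw [hcs] at hsA
                refine Finset.mem_erase.mpr ⟨?_, Finset.mem_univ _⟩
                intro heq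
                rw [Prod.mk.injEq] at heq
                rcases hsA with h | h
                · rw [heq.1] at h; simp at h
                · rw [heq.2] at h; simp at h
              · intro A hA A' hA' heq
                rw [Finset.mem_coe, Finset.mem_filter] at hA hA'
                rw [Prod.mk.injEq] at heq
                have hFAB : F A = F A' := by rw [hA.2, hA'.2]
                funext x
                by_cases hxl : x = l.1
                · subst hxl; exact heq.1
                · by_cases hxm : x = m.1
                  · subst hxm; exact heq.2
                  · have := congrFun hFAB x
                    rwa [hFo A x hxl hxm, hFo A' x hxl hxm] at this
          _ = 3 := by
              rw [Finset.card_erase_of_mem (Finset.mem_univ _)]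
              simp
    omega

lemma countSat (S : Finset (Clause n))
    (h2 : ∀ C ∈ S, C.card ≤ 2) (hdv : ∀ C ∈ S, distinctVars C)
    (hdisj : ∀ C ∈ S, ∀ C' ∈ S, C ≠ C' → Disjoint (clVars C) (clVars C'))
    (t : Finset (Fin n → Bool)) (ht : ∀ A, A ∈ t ↔ ∀ C ∈ S, clauseSat A C) :
    4 ^ S.card * t.card ≤ 3 ^ S.card * 2 ^ n := by
  revert t h2 hdv hdisj
  induction S using Finset.induction_on with
  | empty =>
    intro _ _ _ t ht
    have : t = univ := Finset.eq_univ_of_forall (fun A => (ht A).mpr (by simp))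
    subst this
    simp [Finset.card_univ]
  | @insert a s ha ih =>
    intro h2 hdv hdisj t ht
    have hstep : 4 * t.card ≤ 3 * (univ.filter
        (fun A : Fin n → Bool => ∀ C ∈ s, clauseSat A C)).card := by
      apply stepLemma a (h2 a (Finset.mem_insert_self a s))
        (hdv a (Finset.mem_insert_self a s))
        (fun A => ∀ C ∈ s, clauseSat A C)
      · intro A B hAB hA C' hC'
        obtain ⟨mm, hmm, hms⟩ := hA C' hC'
        refine ⟨mm, hmm, ?_⟩
        rw [← hAB mm.1 ?_]
        · exact hms
        · have hd := hdisj a (Finset.mem_insert_self a s) C'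
            (Finset.mem_insert_of_mem hC') (fun h => ha (h ▸ hC'))
          exact fun hmem => (Finset.disjoint_left.mp hd hmem)
            (Finset.mem_image_of_mem Prod.fst hmm)
      · intro A
        rw [ht]
        simp only [Finset.forall_mem_insert]
        tauto
      · intro A
        simp only [Finset.mem_filter, Finset.mem_univ, true_and]
    have hih := ih (fun C hC => h2 C (Finset.mem_insert_of_mem hC))
      (fun C hC => hdv C (Finset.mem_insert_of_mem hC))
      (fun C hC C' hC' hne => hdisj C (Finset.mem_insert_of_mem hC)
        C' (Finset.mem_insert_of_mem hC') hne)
      (univ.filter (fun A : Fin n → Bool => ∀ C ∈ s, clauseSat A C))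
      (fun A => by simp only [Finset.mem_filter, Finset.mem_univ, true_and])
    rw [Finset.card_insert_of_notMem ha]
    have arith : ∀ X Y : ℕ, 4 * X ≤ 3 * Y → 4 ^ s.card * Y ≤ 3 ^ s.card * 2 ^ n →
        4 ^ (s.card + 1) * X ≤ 3 ^ (s.card + 1) * 2 ^ n := by
      intro X Y hXY hYn
      calc 4 ^ (s.card + 1) * X = 4 ^ s.card * (4 * X) := by ring
        _ ≤ 4 ^ s.card * (3 * Y) := Nat.mul_le_mul_left _ hXY
        _ = 3 * (4 ^ s.card * Y) := by ring
        _ ≤ 3 * (3 ^ s.card * 2 ^ n) := Nat.mul_le_mul_left _ hYn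
        _ = 3 ^ (s.card + 1) * 2 ^ n := by ring
    exact arith _ _ hstep hih

lemma countSatReal (S : Finset (Clause n)) (q : ℕ) (hq : q ≤ S.card)
    (h2 : ∀ C ∈ S, C.card ≤ 2) (hdv : ∀ C ∈ S, distinctVars C)
    (hdisj : ∀ C ∈ S, ∀ C' ∈ S, C ≠ C' → Disjoint (clVars C) (clVars C'))
    (t : Finset (Fin n → Bool)) (ht : ∀ A, A ∈ t ↔ ∀ C ∈ S, clauseSat A C) :
    (t.card : ℝ) ≤ (3/4 : ℝ) ^ q * 2 ^ n := by
  have h := countSat S h2 hdv hdisj t ht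
  have h4 : (0:ℝ) < 4 ^ S.card := by positivity
  have key : ∀ X : ℕ, 4 ^ S.card * X ≤ 3 ^ S.card * 2 ^ n →
      (X : ℝ) ≤ (3/4 : ℝ) ^ S.card * 2 ^ n := by
    intro X hX
    rw [div_pow, div_mul_eq_mul_div, le_div_iff₀ h4]
    have := (Nat.cast_le (α := ℝ)).mpr hX
    push_cast at this
    linarith
  refine (key _ h).trans ?_
  apply mul_le_mul_of_nonneg_right _ (by positivity)
  exact pow_le_pow_of_le_one (by norm_num) (by norm_num) hq

end Helpers

/-- If a 3-CNF `φ` admits a sequence of literals `ℓ_1, …, ℓ_r` on distinct variables, where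
each `F_{i-1}` (obtained by successively asserting `ℓ_1, …, ℓ_{i-1}`) contains a 1-sunflower
of size at least `q` with core `{ℓ_i}` whose clauses contain the variable of `ℓ_i` only as
the core literal, then at most `r·(3/4)^q·2^n` assignments satisfy `φ` while setting some
`ℓ_i` false. -/
theorem stmt11 (n r q : ℕ) (hr : 1 ≤ r) (hq : 1 ≤ q)
    (φ : Cnf n) (h3 : ∀ C ∈ φ, C.card ≤ 3) (hdv : ∀ C ∈ φ, distinctVars C)
    (ℓ : Fin r → Lit n) (hinj : Function.Injective (fun i => (ℓ i).1))
    (Fseq : Fin (r + 1) → Cnf n) (h0 : Fseq 0 = φ)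
    (hstep : ∀ i : Fin r, Fseq i.succ = setTrue (Fseq i.castSucc) (ℓ i))
    (hsun : ∀ i : Fin r, ∃ S ⊆ Fseq i.castSucc, q ≤ S.card ∧
        (∀ C ∈ S, ℓ i ∈ C) ∧
        (∀ C ∈ S, ∀ l' ∈ C, l'.1 = (ℓ i).1 → l' = ℓ i) ∧
        (∀ C ∈ S, ∀ C' ∈ S, C ≠ C' →
          Disjoint (clVars (C.erase (ℓ i))) (clVars (C'.erase (ℓ i))))) :
    (Nat.card {A : Fin n → Bool //
        cnfSat A φ ∧ ∃ i : Fin r, A (ℓ i).1 ≠ (ℓ i).2} : ℝ)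
      ≤ r * (3/4 : ℝ)^q * 2^n := by
  classical
  -- structural invariant: every clause of every Fseq k has card ≤ 3 and distinct variables
  have inv : ∀ k (hk : k ≤ r), ∀ C ∈ Fseq ⟨k, Nat.lt_succ_of_le hk⟩,
      C.card ≤ 3 ∧ distinctVars C := by
    intro k
    induction k with
    | zero =>
      intro hk C hC
      have h00 : (⟨0, Nat.lt_succ_of_le hk⟩ : Fin (r+1)) = 0 := by
        exact Fin.ext (by simp)
      rw [h00, h0] at hC
      exact ⟨h3 C hC, hdv C hC⟩
    | succ k ih =>
      intro hk C hC
      have hk' : k < r := hk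
      have hke : (⟨k+1, Nat.lt_succ_of_le hk⟩ : Fin (r+1)) = (⟨k, hk'⟩ : Fin r).succ := rfl
      rw [hke, hstep ⟨k, hk'⟩] at hC
      obtain ⟨D, hD, -, rfl⟩ := setTrue_mem hC
      have hDk : D.card ≤ 3 ∧ distinctVars D := ih (le_of_lt hk') D hD
      exact ⟨le_trans (Finset.card_erase_le) hDk.1,
        distinctVars_subset (Finset.erase_subset _ _) hDk.2⟩
  -- if A satisfies φ and sets ℓ_j true for all j < k then A satisfies F_k
  have hpre : ∀ k (hk : k ≤ r) (A : Fin n → Bool), cnfSat A φ →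
      (∀ j : Fin r, (j : ℕ) < k → A (ℓ j).1 = (ℓ j).2) →
      cnfSat A (Fseq ⟨k, Nat.lt_succ_of_le hk⟩) := by
    intro k
    induction k with
    | zero =>
      intro hk A hφA _
      have h00 : (⟨0, Nat.lt_succ_of_le hk⟩ : Fin (r+1)) = 0 := Fin.ext (by simp)
      rw [h00, h0]
      exact hφA
    | succ k ih =>
      intro hk A hφA hset
      have hk' : k < r := hk
      have hke : (⟨k+1, Nat.lt_succ_of_le hk⟩ : Fin (r+1)) = (⟨k, hk'⟩ : Fin r).succ := rfl
      rw [hke, hstep ⟨k, hk'⟩]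
      exact cnfSat_setTrue
        (ih (le_of_lt hk') A hφA (fun j hj => hset j (lt_trans hj (Nat.lt_succ_self k))))
        (hset ⟨k, hk'⟩ (Nat.lt_succ_self k))
  set badset : Fin r → Finset (Fin n → Bool) := fun i =>
    univ.filter (fun A => cnfSat A φ ∧ A (ℓ i).1 ≠ (ℓ i).2 ∧
      ∀ j : Fin r, j < i → A (ℓ j).1 = (ℓ j).2) with hbadset
  have hcard : Nat.card {A : Fin n → Bool //
        cnfSat A φ ∧ ∃ i : Fin r, A (ℓ i).1 ≠ (ℓ i).2}
      = (univ.filter (fun A : Fin n → Bool =>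
          cnfSat A φ ∧ ∃ i : Fin r, A (ℓ i).1 ≠ (ℓ i).2)).card := by
    rw [Nat.card_eq_fintype_card]
    exact Fintype.card_subtype _
  have hsubset : univ.filter (fun A : Fin n → Bool =>
        cnfSat A φ ∧ ∃ i : Fin r, A (ℓ i).1 ≠ (ℓ i).2)
      ⊆ Finset.univ.biUnion badset := by
    intro A hA
    rw [Finset.mem_filter] at hA
    obtain ⟨-, hφA, hex⟩ := hA
    have hne : (univ.filter (fun j : Fin r => A (ℓ j).1 ≠ (ℓ j).2)).Nonempty := by
      obtain ⟨i, hi⟩ := hex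
      exact ⟨i, Finset.mem_filter.mpr ⟨Finset.mem_univ _, hi⟩⟩
    set T := univ.filter (fun j : Fin r => A (ℓ j).1 ≠ (ℓ j).2) with hT
    refine Finset.mem_biUnion.mpr ⟨T.min' hne, Finset.mem_univ _, ?_⟩
    rw [hbadset, Finset.mem_filter]
    refine ⟨Finset.mem_univ _, hφA, ?_, ?_⟩
    · exact (Finset.mem_filter.mp (T.min'_mem hne)).2
    · intro j hj
      by_contra hjne
      have hjT : j ∈ T := Finset.mem_filter.mpr ⟨Finset.mem_univ _, hjne⟩
      exact absurd (T.min'_le j hjT) (not_le.mpr hj)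
  have hbound : ∀ i : Fin r, ((badset i).card : ℝ) ≤ (3/4 : ℝ)^q * 2^n := by
    intro i
    obtain ⟨S, hSsub, hSq, hScore, -, hSdisj⟩ := hsun i
    set E := S.image (fun C : Clause n => C.erase (ℓ i)) with hE
    have hinjE : Set.InjOn (fun C : Clause n => C.erase (ℓ i)) ↑S := by
      intro C hC C' hC' hee
      rw [← Finset.insert_erase (hScore C hC), ← Finset.insert_erase (hScore C' hC')]
      simp only at hee
      rw [hee]
    have hcardE : q ≤ E.card := by
      rw [hE, Finset.card_image_of_injOn hinjE]
      exact hSq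
    have hprop : ∀ C ∈ S, C.card ≤ 3 ∧ distinctVars C := by
      intro C hC
      exact inv i.1 (le_of_lt i.isLt) C (hSsub hC)
    have hsub2 : badset i ⊆ univ.filter (fun A => ∀ e ∈ E, clauseSat A e) := by
      intro A hA
      rw [hbadset, Finset.mem_filter] at hA
      obtain ⟨-, hφA, hfalse, hprev⟩ := hA
      rw [Finset.mem_filter]
      refine ⟨Finset.mem_univ _, ?_⟩
      have hFsat : cnfSat A (Fseq i.castSucc) :=
        hpre i.1 (le_of_lt i.isLt) A hφA (fun j hj => hprev j hj)
      intro e he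
      rw [hE] at he
      obtain ⟨C, hC, rfl⟩ := Finset.mem_image.mp he
      obtain ⟨mm, hmm, hms⟩ := hFsat C (hSsub hC)
      refine ⟨mm, Finset.mem_erase.mpr ⟨?_, hmm⟩, hms⟩
      rintro rfl
      exact hfalse hms
    have hcount : ((univ.filter (fun A : Fin n → Bool =>
        ∀ e ∈ E, clauseSat A e)).card : ℝ) ≤ (3/4 : ℝ)^q * 2^n := by
      apply countSatReal E q hcardE
      · intro e he
        rw [hE] at he
        obtain ⟨C, hC, rfl⟩ := Finset.mem_image.mp he
        rw [Finset.card_erase_of_mem (hScore C hC)]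
        exact Nat.sub_le_sub_right (hprop C hC).1 1
      · intro e he
        rw [hE] at he
        obtain ⟨C, hC, rfl⟩ := Finset.mem_image.mp he
        exact distinctVars_subset (Finset.erase_subset _ _) (hprop C hC).2
      · intro e he e' he' hne
        rw [hE] at he he'
        obtain ⟨C, hC, rfl⟩ := Finset.mem_image.mp he
        obtain ⟨C', hC', rfl⟩ := Finset.mem_image.mp he'
        exact hSdisj C hC C' hC' (fun h => hne (by rw [h]))
      · intro A
        rw [Finset.mem_filter]
        simp only [Finset.mem_univ, true_and]
    calc ((badset i).card : ℝ)
        ≤ ((univ.filter (fun A : Fin n → Bool => ∀ e ∈ E, clauseSat A e)).card : ℝ) := by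
          exact_mod_cast Finset.card_le_card hsub2
      _ ≤ (3/4 : ℝ)^q * 2^n := hcount
  calc (Nat.card {A : Fin n → Bool //
        cnfSat A φ ∧ ∃ i : Fin r, A (ℓ i).1 ≠ (ℓ i).2} : ℝ)
      = ((univ.filter (fun A : Fin n → Bool =>
          cnfSat A φ ∧ ∃ i : Fin r, A (ℓ i).1 ≠ (ℓ i).2)).card : ℝ) := by rw [hcard]
    _ ≤ ((Finset.univ.biUnion badset).card : ℝ) := by
        exact_mod_cast Finset.card_le_card hsubset
    _ ≤ ((∑ i : Fin r, (badset i).card : ℕ) : ℝ) := by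
        exact_mod_cast Finset.card_biUnion_le
    _ = ∑ i : Fin r, ((badset i).card : ℝ) := by push_cast; rfl
    _ ≤ ∑ _i : Fin r, (3/4 : ℝ)^q * 2^n := Finset.sum_le_sum (fun i _ => hbound i)
    _ = r * (3/4 : ℝ)^q * 2^n := by
        rw [Finset.sum_const, Finset.card_univ, Fintype.card_fin, nsmul_eq_mul]
        ring
end

section
/- Let w ≥ 2 and let Q_1, …, Q_{w−1} be positive integers. Let ψ be a CNF formula with pairwise distinct clauses, each of width exactly w, such that for every 1 ≤ v ≤ w−1, ψ contains no v-sunflower of size Q_v. Then every literal occurs in at most (w−1)! · 2^{w−1} · ∏_{v=1}^{w−1} (Q_v − 1) clauses of ψ. -/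
private def sunB (w : ℕ) (Q : ℕ → ℕ) : ℕ → ℕ
  | 0 => 1
  | k+1 => 2 * (k+1) * (Q (w - (k+1)) - 1) * sunB w Q k

open Finset in
private theorem sunAux (n w : ℕ) (hw : 2 ≤ w) (Q : ℕ → ℕ)
    (ψ : Cnf n) (hwidth : ∀ C ∈ ψ, C.card = w) (hdv : ∀ C ∈ ψ, distinctVars C)
    (hnosun : ∀ v, 1 ≤ v → v ≤ w - 1 → ¬ ∃ S ⊆ ψ, S.card = Q v ∧ isSunflower S v) :
    ∀ k, k ≤ w - 1 → ∀ L : Clause n, L.card = w - k →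
      (ψ.filter (fun C => L ⊆ C)).card ≤ sunB w Q k := by
  classical
  intro k
  induction k with
  | zero =>
    intro _ L hL
    have hsub : ψ.filter (fun C => L ⊆ C) ⊆ {L} := by
      intro C hC
      simp only [mem_filter] at hC
      have hc : C.card = w := hwidth C hC.1
      have : L = C := Finset.eq_of_subset_of_card_le hC.2 (by omega)
      simp [this]
    calc (ψ.filter (fun C => L ⊆ C)).card ≤ ({L} : Finset (Clause n)).card :=
          Finset.card_le_card hsub
      _ = 1 := Finset.card_singleton _
      _ ≤ sunB w Q 0 := le_rfl
  | succ k ih =>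
    intro hk L hL
    have hw1 : k + 1 + 1 ≤ w := by omega
    set v := w - (k+1) with hv
    have hv1 : 1 ≤ v := by omega
    have hv2 : v ≤ w - 1 := by omega
    set F := ψ.filter (fun C => L ⊆ C) with hF
    have hFmem : ∀ C ∈ F, C ∈ ψ ∧ L ⊆ C := by
      intro C hC; simpa [hF, mem_filter] using hC
    have hCsd : ∀ C ∈ F, (C \ L).card = k + 1 := by
      intro C hC
      obtain ⟨h1, h2⟩ := hFmem C hC
      rw [Finset.card_sdiff_of_subset h2, hwidth C h1, hL]
      omega
    set P := F.powerset.filter (fun T => ∀ C ∈ T, ∀ D ∈ T, C ≠ D →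
      Disjoint (clVars (C \ L)) (clVars (D \ L))) with hP
    have hPne : P.Nonempty := ⟨∅, by simp [hP]⟩
    obtain ⟨T, hTP, hTmax⟩ := Finset.exists_max_image P Finset.card hPne
    have hTP' := hTP
    simp only [hP, mem_filter, mem_powerset] at hTP'
    obtain ⟨hTF, hTgood⟩ := hTP'
    have hTcard : T.card ≤ Q v - 1 := by
      by_contra hcon
      have hQle : Q v ≤ T.card := by omega
      obtain ⟨S, hST, hScard⟩ := Finset.exists_subset_card_eq hQle
      refine hnosun v hv1 hv2 ⟨S, ?_, hScard, L, hL, ?_, ?_⟩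
      · exact hST.trans (hTF.trans (filter_subset _ _))
      · intro C hC; exact (hFmem C (hTF (hST hC))).2
      · intro C hC D hD hne; exact hTgood C (hST hC) D (hST hD) hne
    set V := T.biUnion (fun D => clVars (D \ L)) with hV
    have hVcard : V.card ≤ (Q v - 1) * (k+1) := by
      calc V.card ≤ ∑ D ∈ T, (clVars (D \ L)).card := Finset.card_biUnion_le
        _ ≤ ∑ _D ∈ T, (k+1) := by
            refine Finset.sum_le_sum ?_
            intro D hD
            calc (clVars (D \ L)).card ≤ (D \ L).card := Finset.card_image_le
              _ = k+1 := hCsd D (hTF hD)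
        _ = T.card * (k+1) := by rw [Finset.sum_const, smul_eq_mul]
        _ ≤ (Q v - 1) * (k+1) := Nat.mul_le_mul_right _ hTcard
    have hfresh : ∀ x ∈ V, ∀ b : Bool, (x, b) ∉ L := by
      intro x hx b hxb
      simp only [hV, mem_biUnion] at hx
      obtain ⟨D, hD, hxD⟩ := hx
      simp only [clVars, mem_image] at hxD
      obtain ⟨l0, hl0, hl0x⟩ := hxD
      have hDψ := (hFmem D (hTF hD)).1
      have hLD := (hFmem D (hTF hD)).2
      have hl0D : l0 ∈ D := (Finset.mem_sdiff.mp hl0).1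
      have heq : l0 = (x, b) := hdv D hDψ l0 hl0D (x,b) (hLD hxb) (by simp [hl0x])
      exact (Finset.mem_sdiff.mp hl0).2 (heq ▸ hxb)
    have hcover : ∀ C ∈ F, ∃ x ∈ V, x ∈ clVars (C \ L) := by
      intro C hC
      by_cases hCT : C ∈ T
      · have hne : (C \ L).Nonempty := Finset.card_pos.mp (by rw [hCsd C hC]; omega)
        obtain ⟨l0, hl0⟩ := hne
        refine ⟨l0.1, ?_, mem_image_of_mem _ hl0⟩
        simp only [hV, mem_biUnion]
        exact ⟨C, hCT, mem_image_of_mem _ hl0⟩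
      · have hins : insert C T ∉ P := by
          intro hmem
          have := hTmax _ hmem
          rw [Finset.card_insert_of_notMem hCT] at this
          omega
        have hnotgood : ¬ (∀ C' ∈ insert C T, ∀ D ∈ insert C T, C' ≠ D →
            Disjoint (clVars (C' \ L)) (clVars (D \ L))) := by
          intro hgood
          refine hins ?_
          simp only [hP, mem_filter, mem_powerset]
          exact ⟨Finset.insert_subset hC hTF, hgood⟩
        push_neg at hnotgood
        obtain ⟨C', hC', D, hD, hne, hnd⟩ := hnotgood
        rcases Finset.mem_insert.mp hC' with rfl | hC'T
        · rcases Finset.mem_insert.mp hD with rfl | hDT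
          · exact absurd rfl hne
          · obtain ⟨x, hx1, hx2⟩ := Finset.not_disjoint_iff.mp hnd
            refine ⟨x, ?_, hx1⟩
            simp only [hV, mem_biUnion]
            exact ⟨D, hDT, hx2⟩
        · rcases Finset.mem_insert.mp hD with rfl | hDT
          · obtain ⟨x, hx1, hx2⟩ := Finset.not_disjoint_iff.mp hnd
            refine ⟨x, ?_, hx2⟩
            simp only [hV, mem_biUnion]
            exact ⟨C', hC'T, hx1⟩
          · exact absurd (hTgood C' hC'T D hDT hne) hnd
    have hsub : F ⊆ V.biUnion (fun x => ({true, false} : Finset Bool).biUnion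
        (fun b => ψ.filter (fun C => insert (x, b) L ⊆ C))) := by
      intro C hC
      obtain ⟨x, hxV, hxC⟩ := hcover C hC
      obtain ⟨l0, hl0, hl0x⟩ := Finset.mem_image.mp hxC
      rw [Finset.mem_biUnion]
      refine ⟨x, hxV, ?_⟩
      rw [Finset.mem_biUnion]
      refine ⟨l0.2, by simp, ?_⟩
      rw [Finset.mem_filter]
      refine ⟨(hFmem C hC).1, ?_⟩
      rw [Finset.insert_subset_iff]
      constructor
      · have hx2 : (x, l0.2) = l0 := by rw [← hl0x]
        rw [hx2]
        exact (Finset.mem_sdiff.mp hl0).1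
      · exact (hFmem C hC).2
    calc F.card ≤ _ := Finset.card_le_card hsub
      _ ≤ ∑ x ∈ V, (({true,false} : Finset Bool).biUnion
            (fun b => ψ.filter (fun C => insert (x, b) L ⊆ C))).card :=
          Finset.card_biUnion_le
      _ ≤ ∑ x ∈ V, ∑ b ∈ ({true,false} : Finset Bool),
            (ψ.filter (fun C => insert (x,b) L ⊆ C)).card :=
          Finset.sum_le_sum fun x _ => Finset.card_biUnion_le
      _ ≤ ∑ _x ∈ V, ∑ _b ∈ ({true,false} : Finset Bool), sunB w Q k := by
          refine Finset.sum_le_sum fun x hx => Finset.sum_le_sum fun b _ => ?_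
          refine ih (by omega) _ ?_
          rw [Finset.card_insert_of_notMem (hfresh x hx b), hL]
          omega
      _ = V.card * (2 * sunB w Q k) := by
          rw [Finset.sum_const, Finset.sum_const, smul_eq_mul, smul_eq_mul]
          norm_num
      _ ≤ (Q v - 1) * (k+1) * (2 * sunB w Q k) := Nat.mul_le_mul_right _ hVcard
      _ = sunB w Q (k+1) := by rw [sunB, ← hv]; ring

private theorem sunB_eq (w : ℕ) (Q : ℕ → ℕ) (k : ℕ) :
    sunB w Q k = k.factorial * 2^k * ∏ j ∈ Finset.Icc 1 k, (Q (w - j) - 1) := by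
  induction k with
  | zero => simp [sunB]
  | succ k ih =>
    rw [sunB, ih, Finset.prod_Icc_succ_top (by omega : 1 ≤ k + 1),
      Nat.factorial_succ, pow_succ]
    ring

private theorem prod_reflect (w : ℕ) (hw : 2 ≤ w) (Q : ℕ → ℕ) :
    ∏ j ∈ Finset.Icc 1 (w-1), (Q (w - j) - 1) = ∏ v ∈ Finset.Icc 1 (w-1), (Q v - 1) := by
  refine Finset.prod_nbij' (fun j => w - j) (fun v => w - v) ?_ ?_ ?_ ?_ ?_ <;>
    intro a ha <;> simp only [Finset.mem_Icc] at * <;> omega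

/-- Bounded repetition: if `ψ` consists of pairwise distinct clauses of width exactly `w ≥ 2`
and contains no `v`-sunflower of size `Q_v` for any `1 ≤ v ≤ w-1`, then every literal occurs
in at most `(w-1)!·2^{w-1}·∏_{v=1}^{w-1}(Q_v - 1)` clauses of `ψ`. -/
theorem stmt12 (n w : ℕ) (hw : 2 ≤ w) (Q : ℕ → ℕ)
    (hQ : ∀ v, 1 ≤ v → v ≤ w - 1 → 0 < Q v)
    (ψ : Cnf n) (hwidth : ∀ C ∈ ψ, C.card = w) (hdv : ∀ C ∈ ψ, distinctVars C)
    (hnosun : ∀ v, 1 ≤ v → v ≤ w - 1 → ¬ ∃ S ⊆ ψ, S.card = Q v ∧ isSunflower S v)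
    (l : Lit n) :
    (ψ.filter (fun C => l ∈ C)).card ≤
      (w - 1).factorial * 2^(w - 1) * ∏ v ∈ Finset.Icc 1 (w - 1), (Q v - 1) := by
  classical
  have h1 : ψ.filter (fun C => l ∈ C) = ψ.filter (fun C => ({l} : Clause n) ⊆ C) := by
    apply Finset.filter_congr
    intro C _
    simp
  rw [h1]
  have h2 := sunAux n w hw Q ψ hwidth hdv hnosun (w-1) le_rfl {l}
    (by rw [Finset.card_singleton]; omega)
  calc (ψ.filter (fun C => ({l} : Clause n) ⊆ C)).card ≤ sunB w Q (w-1) := h2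
    _ = _ := by rw [sunB_eq, prod_reflect w hw Q]
end

section
/- Let ψ be a CNF formula consisting of m pairwise distinct nonempty clauses, each of width at most w, such that every literal occurs in at most P clauses of ψ. Then ψ contains a variable-disjoint set of at least ⌈m/(2wP)⌉ clauses. -/
/-- If `ψ` consists of `m` pairwise distinct nonempty clauses of width at most `w`, and every
literal occurs in at most `P` clauses, then `ψ` contains a variable-disjoint set of at least
`⌈m/(2wP)⌉` clauses. -/
theorem stmt13 (n w P m : ℕ) (ψ : Cnf n) (hm : ψ.card = m)
    (hne : ∀ C ∈ ψ, C.Nonempty) (hwidth : ∀ C ∈ ψ, C.card ≤ w)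
    (hP : ∀ l : Lit n, (ψ.filter (fun C => l ∈ C)).card ≤ P) :
    ∃ D ⊆ ψ, varDisjoint D ∧ ⌈(m : ℚ) / (2 * w * P)⌉₊ ≤ D.card := by
  classical
  rcases Nat.eq_zero_or_pos (2 * w * P) with h0 | hpos
  · refine ⟨∅, Finset.empty_subset _, ?_, ?_⟩
    · intro C hC; simp at hC
    · have hz : ((2 : ℚ) * w * P) = 0 := by exact_mod_cast h0
      simp [hz]
  -- pick a variable-disjoint subset of maximal cardinality
  set T : Finset (Finset (Clause n)) := ψ.powerset.filter (fun D => varDisjoint D) with hT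
  have hTne : T.Nonempty := by
    refine ⟨∅, ?_⟩
    exact Finset.mem_filter.mpr ⟨Finset.empty_mem_powerset _, fun C hC => by simp at hC⟩
  obtain ⟨D, hDT, hDmax⟩ := T.exists_max_image Finset.card hTne
  have hDψ : D ⊆ ψ := by
    have := (Finset.mem_filter.mp hDT).1
    exact Finset.mem_powerset.mp this
  have hDdisj : varDisjoint D := (Finset.mem_filter.mp hDT).2
  -- maximality: every clause of ψ shares a variable with some clause of D
  have hcover : ∀ C ∈ ψ, ∃ C' ∈ D, ¬ Disjoint (clVars C) (clVars C') := by
    intro C hC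
    by_contra hcon
    push_neg at hcon
    have hCnotD : C ∉ D := by
      intro hCD
      have hne' : (clVars C).Nonempty := by
        obtain ⟨l, hl⟩ := hne C hC
        exact ⟨l.1, Finset.mem_image_of_mem Prod.fst hl⟩
      have hemp : clVars C = ∅ := (Finset.disjoint_self_iff_empty _).mp (hcon C hCD)
      exact (Finset.nonempty_iff_ne_empty.mp hne') hemp
    have hins : insert C D ∈ T := by
      refine Finset.mem_filter.mpr ⟨Finset.mem_powerset.mpr ?_, ?_⟩
      · exact Finset.insert_subset hC hDψ
      · intro A hA B hB hAB
        rcases Finset.mem_insert.mp hA with hA' | hA'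
        · rcases Finset.mem_insert.mp hB with hB' | hB'
          · exact absurd (hA'.trans hB'.symm) hAB
          · subst hA'; exact hcon B hB'
        · rcases Finset.mem_insert.mp hB with hB' | hB'
          · subst hB'; exact (hcon A hA').symm
          · exact hDdisj A hA' B hB' hAB
    have hlt : D.card < (insert C D).card := by
      rw [Finset.card_insert_of_notMem hCnotD]; omega
    exact absurd (hDmax _ hins) (not_le.mpr hlt)
  -- counting: m ≤ D.card * (2 * w * P)
  have hsub : ψ ⊆ D.biUnion (fun C' => ψ.filter (fun C => ¬ Disjoint (clVars C) (clVars C'))) := by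
    intro C hC
    obtain ⟨C', hC', hnd⟩ := hcover C hC
    exact Finset.mem_biUnion.mpr ⟨C', hC', Finset.mem_filter.mpr ⟨hC, hnd⟩⟩
  have hper : ∀ C' ∈ D,
      (ψ.filter (fun C => ¬ Disjoint (clVars C) (clVars C'))).card ≤ 2 * w * P := by
    intro C' hC'
    have hsub2 : ψ.filter (fun C => ¬ Disjoint (clVars C) (clVars C')) ⊆
        ((clVars C') ×ˢ (Finset.univ : Finset Bool)).biUnion
          (fun l => ψ.filter (fun C => l ∈ C)) := by
      intro C hC
      obtain ⟨hCψ, hnd⟩ := Finset.mem_filter.mp hC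
      obtain ⟨x, hx⟩ := Finset.not_disjoint_iff.mp hnd
      obtain ⟨hx1, hx2⟩ := hx
      obtain ⟨l, hl, hlx⟩ := Finset.mem_image.mp hx1
      refine Finset.mem_biUnion.mpr ⟨(x, l.2), ?_, ?_⟩
      · exact Finset.mem_product.mpr ⟨hx2, Finset.mem_univ _⟩
      · refine Finset.mem_filter.mpr ⟨hCψ, ?_⟩
        have : l = (x, l.2) := by
          cases l; simp_all
        rwa [← this]
    calc (ψ.filter (fun C => ¬ Disjoint (clVars C) (clVars C'))).card
        ≤ (((clVars C') ×ˢ (Finset.univ : Finset Bool)).biUnion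
            (fun l => ψ.filter (fun C => l ∈ C))).card := Finset.card_le_card hsub2
      _ ≤ ∑ l ∈ (clVars C') ×ˢ (Finset.univ : Finset Bool),
            (ψ.filter (fun C => l ∈ C)).card := Finset.card_biUnion_le
      _ ≤ ∑ _l ∈ (clVars C') ×ˢ (Finset.univ : Finset Bool), P :=
            Finset.sum_le_sum (fun l _ => hP l)
      _ = ((clVars C').card * 2) * P := by
            rw [Finset.sum_const, Finset.card_product]
            simp [mul_comm, Nat.smul_one_eq_cast]
      _ ≤ (w * 2) * P := by
            have h1 : (clVars C').card ≤ C'.card := Finset.card_image_le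
            have h2 : C'.card ≤ w := hwidth C' (hDψ hC')
            exact Nat.mul_le_mul_right _ (Nat.mul_le_mul_right _ (le_trans h1 h2))
      _ = 2 * w * P := by ring
  have hmle : m ≤ D.card * (2 * w * P) := by
    calc m = ψ.card := hm.symm
      _ ≤ (D.biUnion (fun C' => ψ.filter (fun C => ¬ Disjoint (clVars C) (clVars C')))).card :=
            Finset.card_le_card hsub
      _ ≤ ∑ C' ∈ D, (ψ.filter (fun C => ¬ Disjoint (clVars C) (clVars C'))).card :=
            Finset.card_biUnion_le
      _ ≤ ∑ _C' ∈ D, 2 * w * P := Finset.sum_le_sum hper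
      _ = D.card * (2 * w * P) := by rw [Finset.sum_const]; simp [mul_comm]
  refine ⟨D, hDψ, hDdisj, ?_⟩
  rw [Nat.ceil_le]
  have hposQ : (0 : ℚ) < 2 * w * P := by
    have : (0 : ℚ) < ((2 * w * P : ℕ) : ℚ) := by exact_mod_cast hpos
    push_cast at this
    linarith
  rw [div_le_iff₀ hposQ]
  have : (m : ℚ) ≤ (D.card : ℚ) * ((2 * w * P : ℕ) : ℚ) := by exact_mod_cast hmle
  push_cast at this
  linarith
end

section
/- Let F be a CNF formula with clauses C_1, …, C_m over variables x_1, …, x_n, let t ≥ 1 be an integer with t ≤ n + 1, and let x_{n+1}, y_1, …, y_t be fresh variables. Let F' be the CNF over the n + 1 + t variables whose clauses are C_i ∪ {x_{n+1}} for 1 ≤ i ≤ m together with the clause (¬x_{n+1} ∨ y_1 ∨ ⋯ ∨ y_t). Then #SAT(F') = 2^t·#SAT(F) + 2^{n+t} − 2^n, and #SAT(F') ≥ 2^{n+t} if and only if #SAT(F) ≥ 2^{n−t}. -/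
section Glue
variable {n t : ℕ}

def glue (B : Fin n → Bool) (b : Bool) (y : Fin t → Bool) : Fin (n + 1 + t) → Bool :=
  Fin.append (Fin.snoc B b) y

@[simp] lemma glue_var (B : Fin n → Bool) (b : Bool) (y : Fin t → Bool) (i : Fin n) :
    glue B b y (Fin.castAdd t i.castSucc) = B i := by
  simp [glue, Fin.append_left, Fin.snoc_castSucc]

@[simp] lemma glue_x (B : Fin n → Bool) (b : Bool) (y : Fin t → Bool) :
    glue B b y (Fin.castAdd t (Fin.last n)) = b := by
  simp [glue, Fin.append_left]

@[simp] lemma glue_y (B : Fin n → Bool) (b : Bool) (y : Fin t → Bool) (j : Fin t) :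
    glue B b y (Fin.natAdd (n + 1) j) = y j := by
  simp [glue, Fin.append_right]

lemma glue_eta (A : Fin (n + 1 + t) → Bool) :
    glue (fun i => A (Fin.castAdd t i.castSucc)) (A (Fin.castAdd t (Fin.last n)))
      (fun j => A (Fin.natAdd (n + 1) j)) = A := by
  funext i
  refine Fin.addCases (fun i => ?_) (fun j => ?_) i
  · refine Fin.lastCases ?_ (fun k => ?_) i
    · simp [glue, Fin.append_left]
    · simp [glue, Fin.append_left]
  · simp [glue, Fin.append_right]

end Glue



/-- For `F` over `n` variables, fresh variables `x_{n+1}, y_1, …, y_t` (`1 ≤ t ≤ n+1`), and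
`F'` over `n+1+t` variables with clauses `C_i ∪ {x_{n+1}}` together with
`(¬x_{n+1} ∨ y_1 ∨ ⋯ ∨ y_t)`, we have `#SAT(F') = 2^t·#SAT(F) + 2^{n+t} - 2^n`, and
`#SAT(F') ≥ 2^{n+t}` iff `#SAT(F) ≥ 2^{n-t}`. -/
theorem stmt16 (n t : ℕ) (ht : 1 ≤ t) (htn : t ≤ n + 1) (F : Cnf n)
    (F' : Cnf (n + 1 + t))
    (hF' : F' = insert
        (insert ((Fin.castAdd t (Fin.last n) : Fin (n + 1 + t)), false)
          (Finset.image (fun j : Fin t => ((Fin.natAdd (n + 1) j : Fin (n + 1 + t)), true))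
            Finset.univ))
        (F.image fun C => insert ((Fin.castAdd t (Fin.last n) : Fin (n + 1 + t)), true)
            (C.image fun l => ((Fin.castAdd t l.1.castSucc : Fin (n + 1 + t)), l.2)))) :
    numSat F' = 2^t * numSat F + (2^(n + t) - 2^n) ∧
    (2^(n + t) ≤ numSat F' ↔ (2 : ℝ)^((n : ℤ) - (t : ℤ)) ≤ (numSat F : ℝ)) := by
  classical
  have key : ∀ A : Fin (n + 1 + t) → Bool, cnfSat A F' ↔
      ((A (Fin.castAdd t (Fin.last n)) = false ∨ ∃ j : Fin t, A (Fin.natAdd (n + 1) j) = true) ∧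
       (A (Fin.castAdd t (Fin.last n)) = true ∨
         cnfSat (fun i => A (Fin.castAdd t i.castSucc)) F)) := by
    intro A
    rw [hF']
    constructor
    · intro h
      constructor
      · have h0 := h _ (Finset.mem_insert_self _ _)
        obtain ⟨l, hl, hAl⟩ := h0
        rcases Finset.mem_insert.1 hl with rfl | hl
        · exact Or.inl hAl
        · obtain ⟨j, -, rfl⟩ := Finset.mem_image.1 hl
          exact Or.inr ⟨j, hAl⟩
      · cases hb : A (Fin.castAdd t (Fin.last n)) with
        | true => exact Or.inl rfl
        | false =>
          refine Or.inr fun C hC => ?_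
          have h1 := h _ (Finset.mem_insert_of_mem (Finset.mem_image_of_mem _ hC))
          obtain ⟨l, hl, hAl⟩ := h1
          rcases Finset.mem_insert.1 hl with rfl | hl
          · simp only [hb] at hAl; exact absurd hAl (by simp)
          · obtain ⟨l', hl', rfl⟩ := Finset.mem_image.1 hl
            exact ⟨l', hl', hAl⟩
    · rintro ⟨h1, h2⟩ C hC
      rcases Finset.mem_insert.1 hC with rfl | hC
      · rcases h1 with hx | ⟨j, hj⟩
        · exact ⟨_, Finset.mem_insert_self _ _, hx⟩
        · exact ⟨_, Finset.mem_insert_of_mem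
            (Finset.mem_image.2 ⟨j, Finset.mem_univ _, rfl⟩), hj⟩
      · obtain ⟨C', hC', rfl⟩ := Finset.mem_image.1 hC
        rcases h2 with hx | h2
        · exact ⟨_, Finset.mem_insert_self _ _, hx⟩
        · obtain ⟨l, hl, hAl⟩ := h2 C' hC'
          exact ⟨_, Finset.mem_insert_of_mem (Finset.mem_image_of_mem _ hl), hAl⟩
  -- The bijection
  have e : {A : Fin (n + 1 + t) → Bool // cnfSat A F'} ≃
      ({B : Fin n → Bool // cnfSat B F} × (Fin t → Bool)) ⊕
      ((Fin n → Bool) × {y : Fin t → Bool // ∃ j, y j = true}) := by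
    refine
      { toFun := fun A =>
          if hb : A.1 (Fin.castAdd t (Fin.last n)) = true then
            Sum.inr ((fun i => A.1 (Fin.castAdd t i.castSucc)),
              ⟨fun j => A.1 (Fin.natAdd (n + 1) j),
                ((key A.1).1 A.2).1.resolve_left (by simp [hb])⟩)
          else
            Sum.inl (⟨fun i => A.1 (Fin.castAdd t i.castSucc),
              ((key A.1).1 A.2).2.resolve_left hb⟩,
              fun j => A.1 (Fin.natAdd (n + 1) j))
        invFun := fun p =>
          match p with
          | Sum.inl (B, y) => ⟨glue B.1 false y, (key _).2
              ⟨Or.inl (glue_x _ _ _), Or.inr (by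
                have : (fun i => glue B.1 false y (Fin.castAdd t i.castSucc)) = B.1 :=
                  funext fun i => glue_var _ _ _ _
                rw [this]; exact B.2)⟩⟩
          | Sum.inr (B, y) => ⟨glue B true y.1, (key _).2
              ⟨Or.inr (by obtain ⟨j, hj⟩ := y.2; exact ⟨j, by simp [hj]⟩),
               Or.inl (glue_x _ _ _)⟩⟩
        left_inv := ?_
        right_inv := ?_ }
    · rintro ⟨A, hA⟩
      by_cases hb : A (Fin.castAdd t (Fin.last n)) = true
      · apply Subtype.ext
        simp only [dif_pos hb]
        rw [← hb]
        exact glue_eta A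
      · apply Subtype.ext
        simp only [dif_neg hb]
        have hb' : A (Fin.castAdd t (Fin.last n)) = false := by
          cases h : A (Fin.castAdd t (Fin.last n)) <;> simp_all
        rw [← hb']
        exact glue_eta A
    · rintro (⟨B, y⟩ | ⟨B, y⟩)
      · have hx : glue B.1 false y (Fin.castAdd t (Fin.last n)) = true ↔ False := by simp
        simp only [dif_neg (by simp : ¬ glue B.1 false y (Fin.castAdd t (Fin.last n)) = true)]
        congr 1
        refine Prod.ext ?_ ?_
        · apply Subtype.ext; funext i; exact glue_var _ _ _ _
        · funext j; exact glue_y _ _ _ _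
      · simp only [dif_pos (glue_x B true y.1)]
        congr 1
        refine Prod.ext ?_ ?_
        · funext i; exact glue_var _ _ _ _
        · apply Subtype.ext; funext j; exact glue_y _ _ _ _
  -- counting
  have hc1 : Nat.card {B : Fin n → Bool // cnfSat B F} = numSat F := rfl
  have hc2 : Nat.card (Fin t → Bool) = 2 ^ t := by simp [Nat.card_eq_fintype_card]
  have hc3 : Nat.card (Fin n → Bool) = 2 ^ n := by simp [Nat.card_eq_fintype_card]
  have hc4 : Nat.card {y : Fin t → Bool // ∃ j, y j = true} = 2 ^ t - 1 := by
    have hcompl : Fintype.card {y : Fin t → Bool // ¬ ∃ j, y j = true} = 1 := by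
      rw [Fintype.card_eq_one_iff]
      refine ⟨⟨fun _ => false, by simp⟩, ?_⟩
      rintro ⟨y, hy⟩
      apply Subtype.ext
      funext j
      show y j = false
      cases h : y j
      · rfl
      · exact absurd ⟨j, h⟩ hy
    have := Fintype.card_subtype_compl (fun y : Fin t → Bool => ∃ j, y j = true)
    rw [Nat.card_eq_fintype_card]
    have htot : Fintype.card (Fin t → Bool) = 2 ^ t := by simp
    have hle : Fintype.card {y : Fin t → Bool // ∃ j, y j = true} ≤ 2 ^ t := by
      rw [← htot]; exact Fintype.card_subtype_le _
    rw [htot, hcompl] at this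
    generalize hm : Fintype.card {y : Fin t → Bool // ∃ j, y j = true} = m at this hle ⊢
    clear * - this hle
    omega
  have hcard : numSat F' = numSat F * 2 ^ t + 2 ^ n * (2 ^ t - 1) := by
    have h0 : numSat F' = Nat.card
        (({B : Fin n → Bool // cnfSat B F} × (Fin t → Bool)) ⊕
          ((Fin n → Bool) × {y : Fin t → Bool // ∃ j, y j = true})) := Nat.card_congr e
    rw [h0, Nat.card_sum, Nat.card_prod, Nat.card_prod, hc1, hc2, hc3, hc4]
  have hpow : 2 ^ n * 2 ^ t = 2 ^ (n + t) := (pow_add 2 n t).symm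
  have h1t : 1 ≤ 2 ^ t := Nat.one_le_two_pow
  have hsub : 2 ^ n * (2 ^ t - 1) = 2 ^ (n + t) - 2 ^ n := by
    rw [Nat.mul_sub, mul_one, hpow]
  have hmain : numSat F' = 2 ^ t * numSat F + (2 ^ (n + t) - 2 ^ n) := by
    rw [hcard, hsub, Nat.mul_comm]
  refine ⟨hmain, ?_⟩
  have hpowle : 2 ^ n ≤ 2 ^ (n + t) := Nat.pow_le_pow_right (by norm_num) (Nat.le_add_right n t)
  have step1 : 2 ^ (n + t) ≤ numSat F' ↔ 2 ^ n ≤ 2 ^ t * numSat F := by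
    rw [hmain]
    clear * - hpowle h1t
    omega
  have key2 : ∀ m : ℕ, (2:ℝ)^((n:ℤ) - (t:ℤ)) ≤ (m:ℝ) ↔ 2^n ≤ 2^t * m := by
    intro m
    rw [zpow_sub₀ (by norm_num : (2:ℝ) ≠ 0), div_le_iff₀ (by positivity),
      zpow_natCast, zpow_natCast,
      show ((m:ℝ) * 2^t) = ((2^t*m : ℕ):ℝ) by push_cast; ring,
      show ((2:ℝ)^n) = ((2^n : ℕ):ℝ) by push_cast; ring]
    exact Nat.cast_le
  rw [step1]
  exact (key2 (numSat F)).symm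
end

section
/- Let v ≥ 2, m ≥ 1, and n ≥ 1 be integers. Then for every integer N that is a sum of at most m powers of two: if N < 2^n/(2^v − 1), then N ≤ (1 − 2^{−mv}) · 2^n/(2^v − 1). -/
lemma key_s19 (v : ℕ) (hv : 2 ≤ v) :
    ∀ c : ℕ, ∀ l : Multiset ℕ, l.card = c → ∀ m n : ℕ, l.card ≤ m →
      ((l.map fun j => (2:ℝ)^j).sum < 2^n / (2^v - 1)) →
      (l.map fun j => (2:ℝ)^j).sum ≤ (1 - ((2:ℝ)^(m*v))⁻¹) * (2^n/(2^v-1)) := by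
  have hB1 : (1:ℝ) < (2:ℝ)^v := one_lt_pow₀ one_lt_two (by omega)
  have hBpos : (0:ℝ) < (2:ℝ)^v - 1 := by linarith
  intro c
  induction c using Nat.strong_induction_on with
  | _ c IH =>
    intro l hlc m n hlm hlt
    by_cases h0 : l = 0
    · subst h0
      simp only [Multiset.map_zero, Multiset.sum_zero]
      have h1 : ((2:ℝ)^(m*v))⁻¹ ≤ 1 := by
        rw [inv_le_one_iff₀]; right; exact one_le_pow₀ one_le_two
      have h2 : (0:ℝ) ≤ 2^n / (2^v - 1) := by positivity
      nlinarith
    by_cases hnd : l.Nodup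
    · -- nodup case
      have hne : l.toFinset.Nonempty := by
        rw [Multiset.toFinset_nonempty]; exact h0
      set j := l.toFinset.max' hne with hj
      have hjmem : j ∈ l := Multiset.mem_toFinset.mp (l.toFinset.max'_mem hne)
      have hjmax : ∀ x ∈ l, x ≤ j := fun x hx => l.toFinset.le_max' x (Multiset.mem_toFinset.mpr hx)
      set t := l.erase j with htdef
      have hl : j ::ₘ t = l := Multiset.cons_erase hjmem
      have hsum : (l.map fun i => (2:ℝ)^i).sum = 2^j + (t.map fun i => (2:ℝ)^i).sum := by
        rw [← hl]; simp
      have htnn : (0:ℝ) ≤ (t.map fun i => (2:ℝ)^i).sum :=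
        Multiset.sum_nonneg (by
          intro x hx
          obtain ⟨i, _, rfl⟩ := Multiset.mem_map.mp hx
          positivity)
      have hjle : (2:ℝ)^j ≤ (l.map fun i => (2:ℝ)^i).sum := by rw [hsum]; linarith
      have hprod : (2:ℝ)^j * ((2:ℝ)^v - 1) < 2^n := by
        have h := (lt_div_iff₀ hBpos).mp (lt_of_le_of_lt hjle hlt)
        linarith
      have hpow2 : (2:ℝ)^(j + (v-1)) < 2^n := by
        have hv1 : (2:ℝ)^(v-1) ≤ (2:ℝ)^v - 1 := by
          have h2v : (2:ℝ)^v = 2 * 2^(v-1) := by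
            rw [← pow_succ']
            congr 1; omega
          have h1 : (1:ℝ) ≤ 2^(v-1) := one_le_pow₀ one_le_two
          linarith
        calc (2:ℝ)^(j+(v-1)) = 2^j * 2^(v-1) := pow_add 2 j (v-1)
          _ ≤ 2^j * (2^v - 1) := by nlinarith [pow_pos (two_pos:(0:ℝ)<2) j]
          _ < 2^n := hprod
      have hjvn : j + v ≤ n := by
        have h := (pow_lt_pow_iff_right₀ (one_lt_two : (1:ℝ) < 2)).mp hpow2
        omega
      have hm1 : 1 ≤ m := by
        have hc1 : 1 ≤ Multiset.card l := by
          rw [← hl]; simp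
        omega
      rcases lt_or_eq_of_le hjvn with hlt2 | heq
      · -- j + v < n
        have hF : (l.map fun i => (2:ℝ)^i).sum = (⟨l, hnd⟩ : Finset ℕ).sum (fun i => (2:ℝ)^i) := rfl
        have hsub : (⟨l, hnd⟩ : Finset ℕ) ⊆ Finset.range (j+1) := by
          intro x hx
          rw [Finset.mem_range]
          exact Nat.lt_succ_of_le (hjmax x hx)
        have hup : (l.map fun i => (2:ℝ)^i).sum ≤ (2:ℝ)^(j+1) - 1 := by
          have h1 : (⟨l, hnd⟩ : Finset ℕ).sum (fun i => (2:ℝ)^i) ≤ (Finset.range (j+1)).sum (fun i => (2:ℝ)^i) :=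
            Finset.sum_le_sum_of_subset_of_nonneg hsub (by intros; positivity)
          have h2 : (Finset.range (j+1)).sum (fun i => (2:ℝ)^i) = 2^(j+1) - 1 := by
            rw [geom_sum_eq (by norm_num : (2:ℝ) ≠ 1)]
            norm_num
          rw [hF]; linarith
        have hjv2 : (2:ℝ)^(j+1) ≤ 2^n / 2^v := by
          rw [le_div_iff₀ (by positivity)]
          rw [← pow_add]
          exact pow_le_pow_right₀ (by norm_num) (by omega)
        have hrhs : (2:ℝ)^n / 2^v ≤ (1 - ((2:ℝ)^(m*v))⁻¹) * (2^n/(2^v-1)) := by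
          have h1 : ((2:ℝ)^(m*v))⁻¹ ≤ ((2:ℝ)^v)⁻¹ := by
            apply inv_anti₀ (by positivity)
            exact pow_le_pow_right₀ (by norm_num) (by nlinarith)
          have h2 : (1 - ((2:ℝ)^v)⁻¹) * ((2:ℝ)^n/(2^v-1)) = (2:ℝ)^n / 2^v := by
            field_simp
          have hD : (0:ℝ) ≤ (2:ℝ)^n/(2^v-1) := by positivity
          nlinarith
        linarith
      · -- j + v = n
        obtain ⟨m', rfl⟩ : ∃ m', m = m' + 1 := ⟨m-1, by omega⟩
        have htcard : t.card + 1 = c := by rw [← hlc, ← hl]; simp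
        have h2n : (2:ℝ)^n = 2^j * 2^v := by rw [← pow_add]; congr 1; omega
        have hts : (t.map fun i => (2:ℝ)^i).sum < 2^j / (2^v - 1) := by
          have heqd : (2:ℝ)^j * 2^v / (2^v-1) - 2^j = 2^j/(2^v-1) := by field_simp; ring
          rw [hsum, h2n] at hlt
          rw [div_sub' (ne_of_gt hBpos)] at heqd
          have := (lt_div_iff₀ hBpos).mp hlt
          rw [lt_div_iff₀ hBpos]
          nlinarith
        have hIH := IH t.card (by omega) t rfl m' j (by omega) hts
        have halg : (1 - ((2:ℝ)^((m'+1)*v))⁻¹) * (2^n/(2^v-1)) = 2^j + (1 - ((2:ℝ)^(m'*v))⁻¹) * (2^j/(2^v-1)) := by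
          have hmm : ((m'+1)*v) = m'*v + v := by ring
          rw [h2n, hmm, pow_add]
          field_simp
          ring
        rw [hsum, halg]
        linarith
    · -- merge two equal elements
      rw [Multiset.nodup_iff_count_le_one] at hnd
      push_neg at hnd
      obtain ⟨a, ha⟩ := hnd
      have h2 : Multiset.replicate 2 a ≤ l := Multiset.le_count_iff_replicate_le.mp (by omega)
      obtain ⟨t, ht⟩ := Multiset.le_iff_exists_add.mp h2
      set l' : Multiset ℕ := (a+1) ::ₘ t with hl'
      have hsum : (l'.map fun j => (2:ℝ)^j).sum = (l.map fun j => (2:ℝ)^j).sum := by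
        rw [ht]
        simp [hl', Multiset.replicate_succ, pow_succ]
        ring
      have hcard : l'.card + 1 = c := by
        rw [← hlc, ht]; simp [hl']
      rw [← hsum] at hlt ⊢
      exact IH l'.card (by omega) l' rfl m n (by omega) hlt

/-- For integers `v ≥ 2`, `m ≥ 1`, `n ≥ 1`: every integer `N` which is a sum of at most `m`
powers of two with `N < 2^n/(2^v - 1)` satisfies `N ≤ (1 - 2^{-mv})·2^n/(2^v - 1)`. -/
theorem stmt19 (v m n : ℕ) (hv : 2 ≤ v) (hm : 1 ≤ m) (hn : 1 ≤ n) :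
    ∀ N : ℤ, IsSumOfPowsTwo m N →
      (N : ℝ) < 2^n / (2^v - 1) →
      (N : ℝ) ≤ (1 - ((2 : ℝ)^(m * v))⁻¹) * (2^n / (2^v - 1)) := by
  rintro N ⟨l, hcard, rfl⟩ hlt
  have hcast : (((l.map (fun j => (2 : ℤ)^j)).sum : ℤ) : ℝ) = (l.map fun j => (2:ℝ)^j).sum := by
    rw [Int.cast_multiset_sum, Multiset.map_map]
    congr 1
    apply Multiset.map_congr rfl
    intro x _
    simp
  rw [hcast] at hlt ⊢
  exact key_s19 v hv l.card l rfl m n hcard hlt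
end
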